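/- arXiv:1506.04306 — 6 statements merged into one kernel-verified Lean document; each statement's English description precedes it below -/
import Mathlib

section
/- Let p be a stochastic matrix on a countable set S, let t : S → (0,∞), B ⊆ S and ρ ∈ (0,1) be such that Σ_{j∈S} p(i,j)·t_j ≤ ρ·t_i for every i ∈ S∖B. Then for every i ∈ S∖B, every j ∈ S and every n ≥ 1, the taboo probability satisfies p^{(n),B}_{ij} ≤ (t_i/t_j)·ρ^n. (Lemma 4.2, first assertion.) -/
open scoped Classical

/-- Taboo probabilities: `tabooP p B n i j` is the probability of going from `i` to `j`
in `n` steps while all intermediate states avoid the taboo set `B`. -/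
noncomputable def tabooP {S : Type*} (p : S → S → ℝ) (B : Set S) : ℕ → S → S → ℝ
  | 0 => fun i j => if i = j then 1 else 0
  | 1 => fun i j => p i j
  | n + 2 => fun i j => ∑' r : ↥Bᶜ, p i (r : S) * tabooP p B (n + 1) (r : S) j

lemma tabooP_nonneg {S : Type*} (p : S → S → ℝ) (hp_nonneg : ∀ i j, 0 ≤ p i j)
    (B : Set S) : ∀ n (i j : S), 0 ≤ tabooP p B n i j := by
  intro n
  induction n using Nat.strong_induction_on with
  | _ n ih =>
    match n with
    | 0 => intro i j; simp only [tabooP]; split <;> norm_num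
    | 1 => exact fun i j => hp_nonneg i j
    | (m + 2) =>
      intro i j
      apply tsum_nonneg
      intro r
      exact mul_nonneg (hp_nonneg _ _) (ih (m + 1) (by omega) _ _)

/-- Lemma 4.2, first assertion: under the weighted spectral gap condition with data
`(t, B, ρ)`, the taboo probabilities satisfy `p^{(n),B}_{ij} ≤ (t_i / t_j) ρ^n`. -/
theorem stmt_2 {S : Type*} [Countable S] (p : S → S → ℝ)
    (hp_nonneg : ∀ i j, 0 ≤ p i j)
    (hp_row : ∀ i, HasSum (fun j => p i j) 1)
    (t : S → ℝ) (ht : ∀ i, 0 < t i)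
    (B : Set S)
    (ρ : ℝ) (hρ0 : 0 < ρ) (hρ1 : ρ < 1)
    (hsum : ∀ i ∉ B, Summable fun j => p i j * t j)
    (hWSG : ∀ i ∉ B, ∑' j, p i j * t j ≤ ρ * t i) :
    ∀ i ∉ B, ∀ j : S, ∀ n : ℕ, 1 ≤ n → tabooP p B n i j ≤ (t i / t j) * ρ ^ n := by
  -- base case: p i j ≤ t i / t j * ρ for i ∉ B
  have base : ∀ i ∉ B, ∀ j : S, p i j ≤ t i / t j * ρ := by
    intro i hi j
    have h1 : p i j * t j ≤ ρ * t i := by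
      refine le_trans ?_ (hWSG i hi)
      exact Summable.le_tsum (hsum i hi) j (fun k _ => mul_nonneg (hp_nonneg i k) (ht k).le)
    have htj := ht j
    rw [← mul_le_mul_iff_of_pos_right htj]
    calc p i j * t j ≤ ρ * t i := h1
      _ = t i / t j * ρ * t j := by field_simp
  suffices h : ∀ n : ℕ, ∀ i ∉ B, ∀ j : S, 1 ≤ n → tabooP p B n i j ≤ (t i / t j) * ρ ^ n by
    intro i hi j n hn; exact h n i hi j hn
  intro n
  induction n using Nat.strong_induction_on with
  | _ n ih =>
    match n with
    | 0 => intro i hi j hn; omega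
    | 1 =>
      intro i hi j _
      simpa [tabooP] using base i hi j
    | (m + 2) =>
      intro i hi j _
      show (∑' r : ↥Bᶜ, p i (r : S) * tabooP p B (m + 1) (r : S) j) ≤ _
      have hIH : ∀ r : ↥Bᶜ, p i (r : S) * tabooP p B (m + 1) (r : S) j ≤
          p i (r : S) * ((t (r : S) / t j) * ρ ^ (m + 1)) := by
        intro r
        exact mul_le_mul_of_nonneg_left
          (ih (m + 1) (by omega) (r : S) r.2 j (by omega)) (hp_nonneg _ _)
      have hsum_sub : Summable (fun r : ↥Bᶜ => p i (r : S) * t (r : S)) :=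
        (hsum i hi).subtype _
      have hsumRHS : Summable (fun r : ↥Bᶜ => p i (r : S) * ((t (r : S) / t j) * ρ ^ (m + 1))) := by
        have : (fun r : ↥Bᶜ => p i (r : S) * ((t (r : S) / t j) * ρ ^ (m + 1))) =
            (fun r : ↥Bᶜ => (p i (r : S) * t (r : S)) * (ρ ^ (m + 1) / t j)) := by
          funext r; field_simp
        rw [this]
        exact hsum_sub.mul_right _
      have hsumLHS : Summable (fun r : ↥Bᶜ => p i (r : S) * tabooP p B (m + 1) (r : S) j) := by
        refine Summable.of_nonneg_of_le (fun r => mul_nonneg (hp_nonneg _ _)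
          (tabooP_nonneg p hp_nonneg B _ _ _)) hIH hsumRHS
      calc (∑' r : ↥Bᶜ, p i (r : S) * tabooP p B (m + 1) (r : S) j)
          ≤ ∑' r : ↥Bᶜ, p i (r : S) * ((t (r : S) / t j) * ρ ^ (m + 1)) :=
            Summable.tsum_le_tsum hIH hsumLHS hsumRHS
        _ = (∑' r : ↥Bᶜ, p i (r : S) * t (r : S)) * (ρ ^ (m + 1) / t j) := by
            rw [← tsum_mul_right]
            congr 1; funext r; field_simp
        _ ≤ (ρ * t i) * (ρ ^ (m + 1) / t j) := by
            refine mul_le_mul_of_nonneg_right ?_ (div_nonneg (pow_nonneg hρ0.le _) (ht j).le)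
            refine le_trans (Summable.tsum_subtype_le _ _ (fun k => mul_nonneg (hp_nonneg i k) (ht k).le)
              (hsum i hi)) (hWSG i hi)
        _ = t i / t j * ρ ^ (m + 2) := by field_simp; ring
end

section
/- Let p be a stochastic matrix on a countable set S with stationary distribution π, and suppose there exist θ ∈ (0,1) and constants C_{ij} > 0 (i,j ∈ S) such that |p^{(m)}_{ij} − π_j| ≤ C_{ij}·θ^m for all i,j ∈ S and all m ≥ 0. Then for all finite words a = (a_0,…,a_{k−1}) ∈ S^k and b = (b_0,…,b_{l−1}) ∈ S^l with π_{b_0} > 0, and for all n ≥ k, |Σ_{c∈S^{n−k}} λ(a⌢c⌢b) − λ(a)·λ(b)| ≤ λ(a)·λ(b)·(C_{a_{k−1},b_0}/(π_{b_0}·θ^k))·θ^n. (Proposition 3.2: exponential decay of correlations of cylinder sets for the shift-invariant Markov measure, deduced from exponential convergence to the stationary distribution.) -/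
open scoped Classical

/-- `n`-step transition probabilities. -/
noncomputable def nstep {S : Type*} (p : S → S → ℝ) : ℕ → S → S → ℝ :=
  tabooP p (∅ : Set S)

/-- Product of transition probabilities along a path starting at `a`. -/
noncomputable def chainWeight {S : Type*} (p : S → S → ℝ) : S → List S → ℝ
  | _, [] => 1
  | a, b :: rest => p a b * chainWeight p b rest

/-- Markov weight of a finite word: `λ(a₀,…,a_{k-1}) = π_{a₀} ∏ p(a_i, a_{i+1})`,
the measure of the corresponding cylinder set for the shift-invariant Markov measure. -/
noncomputable def wordWeight {S : Type*} (p : S → S → ℝ) (π : S → ℝ) : List S → ℝ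
  | [] => 0
  | a :: rest => π a * chainWeight p a rest

section Aux
variable {S : Type*} (p : S → S → ℝ)

lemma nstep_succ_succ (n : ℕ) (i j : S) :
    nstep p (n + 2) i j = ∑' r : S, p i r * nstep p (n + 1) r j := by
  show (∑' r : ↥(∅ : Set S)ᶜ, p i (r : S) * tabooP p (∅ : Set S) (n + 1) (r : S) j) = _
  rw [show ((∅ : Set S)ᶜ) = Set.univ from Set.compl_empty]
  exact tsum_univ (fun r : S => p i r * nstep p (n + 1) r j)

lemma nstep_one (i j : S) : nstep p 1 i j = p i j := rfl

lemma nstep_nonneg (hp_nonneg : ∀ i j, 0 ≤ p i j) :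
    ∀ (n : ℕ) (i j : S), 0 ≤ nstep p n i j
  | 0, i, j => by
      show (0:ℝ) ≤ if i = j then 1 else 0
      split <;> norm_num
  | 1, i, j => hp_nonneg i j
  | (n+2), i, j => by
      rw [nstep_succ_succ]
      exact tsum_nonneg fun r =>
        mul_nonneg (hp_nonneg i r) (nstep_nonneg hp_nonneg (n+1) r j)

lemma nstep_le_one (hp_nonneg : ∀ i j, 0 ≤ p i j)
    (hp_row : ∀ i, HasSum (fun j => p i j) 1) :
    ∀ (n : ℕ) (i j : S), nstep p n i j ≤ 1
  | 0, i, j => by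
      show (if i = j then (1:ℝ) else 0) ≤ 1
      split <;> norm_num
  | 1, i, j => le_hasSum (hp_row i) j (fun k _ => hp_nonneg i k)
  | (n+2), i, j => by
      rw [nstep_succ_succ]
      calc ∑' r : S, p i r * nstep p (n+1) r j ≤ ∑' r : S, p i r := by
            apply Summable.tsum_le_tsum _ _ (hp_row i).summable
            · intro r
              calc p i r * nstep p (n+1) r j ≤ p i r * 1 :=
                    mul_le_mul_of_nonneg_left
                      (nstep_le_one hp_nonneg hp_row (n+1) r j) (hp_nonneg i r)
                _ = p i r := mul_one _
            · exact Summable.of_nonneg_of_le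
                (fun r => mul_nonneg (hp_nonneg i r) (nstep_nonneg p hp_nonneg (n+1) r j))
                (fun r => by
                  calc p i r * nstep p (n+1) r j ≤ p i r * 1 :=
                        mul_le_mul_of_nonneg_left
                          (nstep_le_one hp_nonneg hp_row (n+1) r j) (hp_nonneg i r)
                    _ = p i r := mul_one _)
                (hp_row i).summable
        _ = 1 := (hp_row i).tsum_eq

lemma summable_mul_nstep (hp_nonneg : ∀ i j, 0 ≤ p i j)
    (hp_row : ∀ i, HasSum (fun j => p i j) 1) (n : ℕ) (i j : S) :
    Summable (fun r : S => p i r * nstep p n r j) :=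
  Summable.of_nonneg_of_le
    (fun r => mul_nonneg (hp_nonneg i r) (nstep_nonneg p hp_nonneg n r j))
    (fun r => by
      calc p i r * nstep p n r j ≤ p i r * 1 :=
            mul_le_mul_of_nonneg_left (nstep_le_one p hp_nonneg hp_row n r j) (hp_nonneg i r)
        _ = p i r := mul_one _)
    (hp_row i).summable

lemma chainWeight_nonneg (hp_nonneg : ∀ i j, 0 ≤ p i j) :
    ∀ (x : S) (l : List S), 0 ≤ chainWeight p x l
  | _, [] => by simp [chainWeight]
  | x, (b :: rest) => by
      rw [chainWeight]
      exact mul_nonneg (hp_nonneg x b) (chainWeight_nonneg hp_nonneg b rest)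

lemma chainWeight_append : ∀ (l₁ : List S) (x : S) (t : List S),
    chainWeight p x (l₁ ++ t) =
      chainWeight p x l₁ * chainWeight p ((x :: l₁).getLast (by simp)) t
  | [], x, t => by simp [chainWeight]
  | (r :: l₁), x, t => by
      rw [List.cons_append]
      show p x r * chainWeight p r (l₁ ++ t) = _
      rw [chainWeight_append l₁ r t,
        List.getLast_cons (by simp : r :: l₁ ≠ [])]
      show _ = p x r * chainWeight p r l₁ * _
      ring

lemma wordWeight_append (π : S → ℝ) (a : List S) (ha : a ≠ []) (t : List S) :
    wordWeight p π (a ++ t) = wordWeight p π a * chainWeight p (a.getLast ha) t := by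
  obtain ⟨a0, a', rfl⟩ := List.exists_cons_of_ne_nil ha
  show π a0 * chainWeight p a0 (a' ++ t) = π a0 * chainWeight p a0 a' * _
  rw [chainWeight_append p a']
  ring

end Aux

section Main
variable {S : Type*} (p : S → S → ℝ)

lemma chainWeight_append_cons (x y : S) (c t : List S) :
    chainWeight p x (c ++ (y :: t)) =
      chainWeight p x (c ++ [y]) * chainWeight p y t := by
  have h1 : c ++ (y :: t) = (c ++ [y]) ++ t := by simp
  rw [h1, chainWeight_append p (c ++ [y]) x t]
  congr 2
  show ((x :: c) ++ [y]).getLast (List.cons_ne_nil _ _) = y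
  exact List.getLast_append_singleton _

def consEquiv (S : Type*) (m : ℕ) :
    S × {l : List S // l.length = m} ≃ {l : List S // l.length = m + 1} where
  toFun := fun rc => ⟨rc.1 :: rc.2.1, by simp [rc.2.2]⟩
  invFun := fun c =>
    (c.1.head (List.ne_nil_of_length_pos (by rw [c.2]; omega)),
      ⟨c.1.tail, by simp [List.length_tail, c.2]⟩)
  left_inv := fun ⟨r, ⟨l, h⟩⟩ => by simp
  right_inv := fun ⟨l, h⟩ => by
    apply Subtype.ext
    have hl : l ≠ [] := by intro hnil; simp [hnil] at h
    simp [List.cons_head_tail]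

lemma hasSum_chain (hp_nonneg : ∀ i j, 0 ≤ p i j)
    (hp_row : ∀ i, HasSum (fun j => p i j) 1) (m : ℕ) (x y : S) :
    HasSum (fun c : {l : List S // l.length = m} =>
      chainWeight p x ((c : List S) ++ [y])) (nstep p (m + 1) x y) := by
  induction m generalizing x with
  | zero =>
    haveI : Unique {l : List S // l.length = 0} :=
      ⟨⟨⟨[], rfl⟩⟩, fun l => Subtype.ext (List.length_eq_zero_iff.mp l.2)⟩
    set f : {l : List S // l.length = 0} → ℝ :=
      fun c => chainWeight p x ((c : List S) ++ [y]) with hfdef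
    have hval : ∀ c, f c = p x y * 1 := by
      rintro ⟨l, hl⟩
      rw [hfdef]
      simp only
      rw [List.length_eq_zero_iff.mp hl]
      simp [chainWeight]
    have h := hasSum_unique f
    rw [hval default] at h
    simpa [nstep_one] using h
  | succ m ih =>
    set f : S × {l : List S // l.length = m} → ℝ :=
      fun rc => p x rc.1 * chainWeight p rc.1 ((rc.2 : List S) ++ [y]) with hf
    have hfib : ∀ r : S, HasSum (fun c => f (r, c)) (p x r * nstep p (m + 1) r y) :=
      fun r => (ih r).mul_left (p x r)
    have hnn : 0 ≤ f := fun rc => mul_nonneg (hp_nonneg x rc.1)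
      (chainWeight_nonneg p hp_nonneg rc.1 _)
    have hsum : Summable f := by
      refine (summable_prod_of_nonneg hnn).mpr ⟨fun r => (hfib r).summable, ?_⟩
      have he : (fun r : S => ∑' c, f (r, c)) =
          fun r : S => p x r * nstep p (m + 1) r y := funext fun r => (hfib r).tsum_eq
      rw [he]
      exact summable_mul_nstep p hp_nonneg hp_row (m + 1) x y
    have htsum : ∑' rc, f rc = nstep p (m + 2) x y := by
      rw [Summable.tsum_prod' hsum (fun r => (hfib r).summable), nstep_succ_succ]
      exact tsum_congr fun r => (hfib r).tsum_eq
    have hS : HasSum f (nstep p (m + 2) x y) := htsum ▸ hsum.hasSum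
    refine (Equiv.hasSum_iff (consEquiv S m)).mp ?_
    convert hS using 1
    exact funext fun _ => rfl

end Main


/-- Proposition 3.2: exponential convergence of the `n`-step transition probabilities to the
stationary distribution implies exponential decay of correlations of cylinder sets for the
shift-invariant Markov measure. -/
theorem stmt_7 {S : Type*} [Countable S] (p : S → S → ℝ)
    (hp_nonneg : ∀ i j, 0 ≤ p i j)
    (hp_row : ∀ i, HasSum (fun j => p i j) 1)
    (π : S → ℝ) (hπ_nonneg : ∀ j, 0 ≤ π j) (hπ_sum : HasSum π 1)
    (hπ_stat : ∀ j, HasSum (fun i => π i * p i j) (π j))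
    (θ : ℝ) (hθ0 : 0 < θ) (hθ1 : θ < 1)
    (C : S → S → ℝ) (hC : ∀ i j, 0 < C i j)
    (hconv : ∀ i j : S, ∀ m : ℕ, |nstep p m i j - π j| ≤ C i j * θ ^ m) :
    ∀ (a b : List S) (ha : a ≠ []) (hb : b ≠ []), 0 < π (b.head hb) →
      ∀ n : ℕ, a.length ≤ n →
        |(∑' c : {l : List S // l.length = n - a.length},
            wordWeight p π (a ++ (c : List S) ++ b)) -
          wordWeight p π a * wordWeight p π b| ≤
        wordWeight p π a * wordWeight p π b *
          (C (a.getLast ha) (b.head hb) / (π (b.head hb) * θ ^ a.length)) * θ ^ n := by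
  intro a b ha hb hπb n hn
  obtain ⟨b0, b', rfl⟩ := List.exists_cons_of_ne_nil hb
  have hhead : (b0 :: b').head hb = b0 := rfl
  rw [hhead] at hπb ⊢
  set k := a.length with hk
  set m := n - k with hm
  set L := a.getLast ha with hL
  set Wa := wordWeight p π a with hWa
  set Wb' := chainWeight p b0 b' with hWb'
  have hWa0 : 0 ≤ Wa := by
    obtain ⟨a0, a', rfl⟩ := List.exists_cons_of_ne_nil ha
    exact mul_nonneg (hπ_nonneg a0) (chainWeight_nonneg p hp_nonneg a0 a')
  have hWb'0 : 0 ≤ Wb' := chainWeight_nonneg p hp_nonneg b0 b'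
  have hwb : wordWeight p π (b0 :: b') = π b0 * Wb' := rfl
  -- rewrite each term of the sum
  have hterm : (fun c : {l : List S // l.length = m} =>
      wordWeight p π (a ++ (c : List S) ++ (b0 :: b'))) =
      fun c : {l : List S // l.length = m} =>
        Wa * Wb' * chainWeight p L ((c : List S) ++ [b0]) := by
    funext c
    rw [List.append_assoc, wordWeight_append p π a ha, ← hL, ← hWa,
      chainWeight_append_cons p L b0 (c : List S) b', ← hWb']
    ring
  have hchain := hasSum_chain p hp_nonneg hp_row m L b0
  have hsum : HasSum (fun c : {l : List S // l.length = m} =>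
      wordWeight p π (a ++ (c : List S) ++ (b0 :: b')))
      (Wa * Wb' * nstep p (m + 1) L b0) := by
    rw [hterm]
    exact hchain.mul_left (Wa * Wb')
  rw [hsum.tsum_eq, hwb]
  have key := hconv L b0 (m + 1)
  have hπb0 : π b0 ≠ 0 := ne_of_gt hπb
  have hθk : (θ : ℝ) ^ k ≠ 0 := pow_ne_zero k (ne_of_gt hθ0)
  have hnm : m + k = n := Nat.sub_add_cancel hn
  have hrhs : Wa * (π b0 * Wb') * (C L b0 / (π b0 * θ ^ k)) * θ ^ n =
      Wa * Wb' * (C L b0 * θ ^ m) := by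
    rw [← hnm, pow_add]
    field_simp
  rw [hrhs]
  have h1 : |Wa * Wb' * nstep p (m + 1) L b0 - Wa * (π b0 * Wb')| =
      Wa * Wb' * |nstep p (m + 1) L b0 - π b0| := by
    rw [show Wa * Wb' * nstep p (m + 1) L b0 - Wa * (π b0 * Wb') =
      Wa * Wb' * (nstep p (m + 1) L b0 - π b0) by ring, abs_mul,
      abs_of_nonneg (mul_nonneg hWa0 hWb'0)]
  rw [h1]
  calc Wa * Wb' * |nstep p (m + 1) L b0 - π b0|
      ≤ Wa * Wb' * (C L b0 * θ ^ (m + 1)) :=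
        mul_le_mul_of_nonneg_left key (mul_nonneg hWa0 hWb'0)
    _ = (Wa * Wb' * (C L b0 * θ ^ m)) * θ := by rw [pow_succ]; ring
    _ ≤ (Wa * Wb' * (C L b0 * θ ^ m)) * 1 := by
        exact mul_le_mul_of_nonneg_left hθ1.le
          (mul_nonneg (mul_nonneg hWa0 hWb'0)
            (mul_nonneg (hC L b0).le (pow_nonneg hθ0.le m)))
    _ = Wa * Wb' * (C L b0 * θ ^ m) := mul_one _
end

section
/- Let (f_n)_{n≥1} be a sequence of nonnegative reals with Σ_{n≥1} f_n = 1 and gcd{n ≥ 1 : f_n > 0} = 1, and suppose there are C > 0 and θ ∈ (0,1) with f_n ≤ C·θ^n for all n ≥ 1. Define the renewal sequence (u_n)_{n≥0} by u_0 = 1 and u_n = Σ_{r=1}^{n} f_r·u_{n−r} for n ≥ 1. Then μ := Σ_{n≥1} n·f_n is finite, and there exist c > 0 and θ₁ ∈ (0,1) such that |u_n − 1/μ| ≤ c·θ₁^n for all n ≥ 0. (The renewal-theoretic core of the proof of Proposition 4.3, proved via the generating-function identity P(z) = 1/(1 − F(z)) and the simple pole of P at z = 1.) -/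
open scoped Topology NNReal ENNReal
open FormalMultilinearSeries

set_option maxHeartbeats 4000000 in
/-- Renewal-theoretic core of the proof of Proposition 4.3: for an aperiodic first-return
time distribution `(f_n)_{n ≥ 1}` with exponentially decaying tail, the associated renewal
sequence `(u_n)` converges exponentially fast to `1/μ`, where `μ = Σ_{n ≥ 1} n f_n < ∞`. -/
theorem stmt_8 (f : ℕ → ℝ) (hf0 : f 0 = 0)
    (hf_nonneg : ∀ n, 0 ≤ f n)
    (hf_sum : HasSum f 1)
    (haper : ∀ d : ℕ, (∀ n, 1 ≤ n → 0 < f n → d ∣ n) → d = 1)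
    (C : ℝ) (hC : 0 < C) (θ : ℝ) (hθ0 : 0 < θ) (hθ1 : θ < 1)
    (hbound : ∀ n, 1 ≤ n → f n ≤ C * θ ^ n)
    (u : ℕ → ℝ) (hu0 : u 0 = 1)
    (hurec : ∀ n, 1 ≤ n → u n = ∑ r ∈ Finset.Icc 1 n, f r * u (n - r)) :
    Summable (fun n : ℕ => (n : ℝ) * f n) ∧
      ∃ c : ℝ, 0 < c ∧ ∃ θ₁ : ℝ, 0 < θ₁ ∧ θ₁ < 1 ∧
        ∀ n : ℕ, |u n - 1 / (∑' n : ℕ, (n : ℝ) * f n)| ≤ c * θ₁ ^ n := by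
  classical
  classical
  have hsummf : Summable f := hf_sum.summable
  have hsum_nf : Summable (fun n : ℕ => (n : ℝ) * f n) := by
    refine Summable.of_nonneg_of_le (f := fun n : ℕ => C * ((n:ℝ) * θ ^ n))
      (fun n => mul_nonneg (by positivity) (hf_nonneg n)) ?_ ?_
    · intro n
      rcases Nat.eq_zero_or_pos n with h | h
      · simp [h, hf0]
      · have := hbound n h
        have hn : (0:ℝ) ≤ n := by positivity
        nlinarith
    · exact ((summable_pow_mul_geometric_of_norm_lt_one 1 (by
        rwa [Real.norm_eq_abs, abs_of_pos hθ0])).mul_left C).congr (by intro n; simp)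
  have hu_mem : ∀ n, 0 ≤ u n ∧ u n ≤ 1 := by
    intro n
    induction n using Nat.strong_induction_on with
    | _ n ih =>
      rcases Nat.eq_zero_or_pos n with h | h
      · simp [h, hu0]
      · rw [hurec n h]
        constructor
        · apply Finset.sum_nonneg
          intro r hr
          simp only [Finset.mem_Icc] at hr
          exact mul_nonneg (hf_nonneg r) (ih (n - r) (by omega)).1
        · calc ∑ r ∈ Finset.Icc 1 n, f r * u (n - r)
              ≤ ∑ r ∈ Finset.Icc 1 n, f r := by
                apply Finset.sum_le_sum
                intro r hr
                simp only [Finset.mem_Icc] at hr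
                have h2 := ih (n - r) (by omega)
                nlinarith [hf_nonneg r]
          _ ≤ ∑' r, f r := by
                apply Summable.sum_le_tsum _ (fun r _ => hf_nonneg r) hsummf
          _ = 1 := hf_sum.tsum_eq
  -- the radius of convergence lower bound
  set ρ : ℝ≥0 := Real.toNNReal θ⁻¹ with hρdef
  have hρcoe : (ρ : ℝ) = θ⁻¹ := Real.coe_toNNReal _ (by positivity)
  have hρ1 : (1:ℝ) < ρ := by rw [hρcoe]; exact (one_lt_inv₀ hθ0).mpr hθ1
  set pF : FormalMultilinearSeries ℂ ℂ ℂ := ofScalars ℂ (fun n => (f n : ℂ)) with hpF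
  have hpFnorm : ∀ n, ‖pF n‖ = f n := by
    intro n
    rw [hpF, ofScalars_norm, Complex.norm_real, Real.norm_eq_abs, abs_of_nonneg (hf_nonneg n)]
  have hpFrad : (ρ : ℝ≥0∞) ≤ pF.radius := by
    apply pF.le_radius_of_bound C
    intro n
    rw [hpFnorm]
    rcases Nat.eq_zero_or_pos n with h | h
    · simp [h, hf0]; positivity
    · calc f n * (ρ:ℝ) ^ n ≤ (C * θ ^ n) * (θ⁻¹) ^ n := by
            rw [hρcoe]
            exact mul_le_mul_of_nonneg_right (hbound n h) (by positivity)
      _ = C := by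
            rw [mul_assoc, ← mul_pow]
            field_simp
            simp
  have hρ1e : (1 : ℝ≥0∞) < (ρ : ℝ≥0∞) := by
    rw [← ENNReal.coe_one, ENNReal.coe_lt_coe, ← NNReal.coe_lt_coe]
    exact_mod_cast hρ1
  have hρpos : (0 : ℝ≥0∞) < (ρ : ℝ≥0∞) := lt_trans (by norm_num) hρ1e
  set F : ℂ → ℂ := pF.sum with hFdef
  have hFball : HasFPowerSeriesOnBall F pF 0 ρ :=
    (pF.hasFPowerSeriesOnBall (lt_of_lt_of_le hρpos hpFrad)).mono hρpos hpFrad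
  have hFsum : ∀ z : ℂ, ‖z‖ < (ρ:ℝ) → HasSum (fun n => (f n : ℂ) * z ^ n) (F z) := by
    intro z hz
    have hz' : z ∈ Metric.eball (0:ℂ) ρ := by
      rw [Metric.mem_eball, edist_zero_right, enorm_eq_nnnorm]
      exact_mod_cast (show ‖z‖₊ < ρ by simpa [← NNReal.coe_lt_coe] using hz)
    have h2 := hFball.hasSum hz'
    simp only [zero_add] at h2
    apply h2.congr_fun
    intro n
    rw [hpF, ofScalars_apply_eq, smul_eq_mul]
  -- U series
  set pU : FormalMultilinearSeries ℂ ℂ ℂ := ofScalars ℂ (fun n => (u n : ℂ)) with hpU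
  have hpUnorm : ∀ n, ‖pU n‖ = |u n| := by
    intro n
    rw [hpU, ofScalars_norm, Complex.norm_real, Real.norm_eq_abs]
  have hpUrad : (1 : ℝ≥0∞) ≤ pU.radius := by
    apply pU.le_radius_of_bound 1
    intro n
    rw [hpUnorm]
    simp only [NNReal.coe_one, one_pow, mul_one]
    rw [abs_of_nonneg (hu_mem n).1]
    exact (hu_mem n).2
  set U : ℂ → ℂ := pU.sum with hUdef
  have hUball : HasFPowerSeriesOnBall U pU 0 1 :=
    (pU.hasFPowerSeriesOnBall (lt_of_lt_of_le one_pos hpUrad)).mono one_pos hpUrad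
  have hUsum : ∀ z : ℂ, ‖z‖ < 1 → HasSum (fun n => (u n : ℂ) * z ^ n) (U z) := by
    intro z hz
    have hz' : z ∈ Metric.eball (0:ℂ) 1 := by
      rw [Metric.mem_eball, edist_zero_right, enorm_eq_nnnorm]
      exact_mod_cast (show ‖z‖₊ < 1 by simpa [← NNReal.coe_lt_coe] using hz)
    have h2 := hUball.hasSum hz'
    simp only [zero_add] at h2
    apply h2.congr_fun
    intro n
    rw [hpU, ofScalars_apply_eq, smul_eq_mul]
  -- F 1 = 1
  have hF1 : F 1 = 1 := by
    have h1 : HasSum (fun n => (f n : ℂ) * (1:ℂ) ^ n) (F 1) :=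
      hFsum 1 (by rw [norm_one]; exact hρ1)
    have h2 : HasSum (fun n => (f n : ℂ)) (1:ℂ) := by
      have := Complex.ofRealCLM.hasSum hf_sum
      simpa using this
    have h3 : HasSum (fun n => (f n : ℂ)) (F 1) := by simpa using h1
    exact (h3.unique h2)
  -- renewal identity
  have hren : ∀ z : ℂ, ‖z‖ < 1 → (1 - F z) * U z = 1 := by
    intro z hz
    have hz' : ‖z‖ < (ρ:ℝ) := lt_trans hz hρ1
    have hnormfz : ∀ n, ‖(f n : ℂ) * z ^ n‖ = f n * ‖z‖ ^ n := by
      intro n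
      rw [norm_mul, norm_pow, Complex.norm_real, Real.norm_eq_abs,
        abs_of_nonneg (hf_nonneg n)]
    have hsF : Summable (fun n => ‖(f n : ℂ) * z ^ n‖) := by
      refine Summable.of_nonneg_of_le (fun n => norm_nonneg _) (fun n => ?_) hsummf
      rw [hnormfz]
      have : ‖z‖ ^ n ≤ 1 := pow_le_one₀ (norm_nonneg z) hz.le
      nlinarith [hf_nonneg n]
    have hsU : Summable (fun n => ‖(u n : ℂ) * z ^ n‖) := by
      refine Summable.of_nonneg_of_le (fun n => norm_nonneg _) (fun n => ?_)
        (summable_geometric_of_lt_one (norm_nonneg z) hz)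
      rw [norm_mul, norm_pow, Complex.norm_real, Real.norm_eq_abs,
        abs_of_nonneg (hu_mem n).1]
      have := (hu_mem n).2
      nlinarith [pow_nonneg (norm_nonneg z) n]
    have hkey := tsum_mul_tsum_eq_tsum_sum_antidiagonal_of_summable_norm hsF hsU
    rw [(hFsum z hz').tsum_eq, (hUsum z hz).tsum_eq] at hkey
    have hinner : ∀ n : ℕ, (∑ kl ∈ Finset.HasAntidiagonal.antidiagonal n,
        ((f kl.1 : ℂ) * z ^ kl.1) * ((u kl.2 : ℂ) * z ^ kl.2))
        = (if n = 0 then 0 else (u n : ℂ)) * z ^ n := by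
      intro n
      rw [Finset.Nat.sum_antidiagonal_eq_sum_range_succ_mk]
      have hterm : ∀ k ∈ Finset.range (n+1),
          ((f k : ℂ) * z ^ k) * ((u (n - k) : ℂ) * z ^ (n - k))
          = ((f k * u (n - k) : ℝ) : ℂ) * z ^ n := by
        intro k hk
        simp only [Finset.mem_range] at hk
        have : k + (n - k) = n := by omega
        push_cast
        rw [show z ^ n = z ^ k * z ^ (n - k) from by rw [← pow_add, this]]
        ring
      rw [Finset.sum_congr rfl hterm, ← Finset.sum_mul, ← Complex.ofReal_sum]
      congr 1
      rcases Nat.eq_zero_or_pos n with h | h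
      · simp [h, hf0]
      · rw [if_neg (by omega)]
        have hsplit : Finset.range (n+1) = insert 0 (Finset.Icc 1 n) := by
          ext k
          simp only [Finset.mem_range, Finset.mem_insert, Finset.mem_Icc]
          omega
        rw [hsplit, Finset.sum_insert (by simp), hf0, zero_mul, zero_add, ← hurec n h]
    rw [tsum_congr hinner] at hkey
    have hrhs : HasSum (fun n => (if n = 0 then 0 else (u n : ℂ)) * z ^ n) (U z - 1) := by
      have hone : HasSum (fun n : ℕ => if n = 0 then (1:ℂ) else 0) 1 := by
        convert hasSum_ite_eq 0 (1:ℂ) using 2 with n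
      have := (hUsum z hz).sub hone
      apply this.congr_fun
      intro n
      rcases Nat.eq_zero_or_pos n with h | h
      · simp [h, hu0]
      · simp [Nat.pos_iff_ne_zero.mp h]
    rw [hrhs.tsum_eq] at hkey
    linear_combination -hkey
  -- boundary non-vanishing via aperiodicity
  have hFone : ∀ z : ℂ, ‖z‖ ≤ 1 → F z = 1 → z = 1 := by
    intro z hz hFz
    have h1 : HasSum (fun n => (f n : ℂ) * z ^ n) 1 := by
      rw [← hFz]; exact hFsum z (lt_of_le_of_lt hz hρ1)
    have hre : HasSum (fun n => f n * (z ^ n).re) 1 := by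
      have h2 := Complex.reCLM.hasSum h1
      simpa [Complex.mul_re] using h2
    have hdiff : HasSum (fun n => f n * (1 - (z ^ n).re)) 0 := by
      have h3 := hf_sum.sub hre
      simpa [mul_sub] using h3
    have hrele : ∀ n : ℕ, (z ^ n).re ≤ 1 := by
      intro n
      have h4 : ‖z ^ n‖ ≤ 1 := by
        rw [norm_pow]; exact pow_le_one₀ (norm_nonneg z) hz
      have h5 := Complex.re_le_norm (z ^ n)
      linarith
    have hterm0 : ∀ n, f n * (1 - (z ^ n).re) = 0 := by
      have hnn : ∀ n, 0 ≤ f n * (1 - (z ^ n).re) := fun n =>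
        mul_nonneg (hf_nonneg n) (by linarith [hrele n])
      have h6 := (hasSum_zero_iff_of_nonneg hnn).mp hdiff
      intro n; exact congrFun h6 n
    have hzn : ∀ n, 0 < f n → z ^ n = 1 := by
      intro n hfn
      have h7 : (z ^ n).re = 1 := by
        have := hterm0 n
        rcases mul_eq_zero.mp this with h | h
        · exact absurd h (ne_of_gt hfn)
        · linarith
      have h8 : ‖z ^ n‖ ≤ 1 := by
        rw [norm_pow]; exact pow_le_one₀ (norm_nonneg z) hz
      have h9 : (z ^ n).im = 0 := by
        have := Complex.sq_norm (z ^ n)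
        rw [Complex.normSq_apply, h7] at this
        have habs : ‖z ^ n‖ ≤ 1 := h8
        nlinarith [norm_nonneg (z ^ n), sq_nonneg (z ^ n).im]
      exact Complex.ext h7 h9
    by_contra hzne
    have hex : ∃ n, 0 < f n := by
      by_contra h
      push_neg at h
      have h10 : f = 0 := funext fun n => le_antisymm (h n) (hf_nonneg n)
      rw [h10] at hf_sum
      exact one_ne_zero (hasSum_zero.unique hf_sum).symm
    obtain ⟨n₀, hn₀⟩ := hex
    have hn₀1 : 1 ≤ n₀ := by
      rcases Nat.eq_zero_or_pos n₀ with h | h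
      · rw [h, hf0] at hn₀; linarith
      · exact h
    have hd : ∀ n, 1 ≤ n → 0 < f n → orderOf z ∣ n := fun n _ h2 =>
      orderOf_dvd_of_pow_eq_one (hzn n h2)
    have := haper (orderOf z) hd
    exact hzne (orderOf_eq_one_iff.mp this)
  set μ : ℝ := ∑' n : ℕ, (n : ℝ) * f n with hμdef
  have hμ1 : 1 ≤ μ := by
    calc (1:ℝ) = ∑' n, f n := hf_sum.tsum_eq.symm
    _ ≤ μ := by
      apply Summable.tsum_le_tsum _ hsummf hsum_nf
      intro n
      rcases Nat.eq_zero_or_pos n with h | h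
      · simp [h, hf0]
      · nlinarith [hf_nonneg n, (by exact_mod_cast h : (1:ℝ) ≤ (n:ℝ))]
  have hμ0 : (0:ℝ) < μ := lt_of_lt_of_le one_pos hμ1
  -- derivative of F at 1
  have h1mem : (1:ℂ) ∈ Metric.eball (0:ℂ) ρ := by
    rw [Metric.mem_eball, edist_zero_right, enorm_eq_nnnorm]
    exact_mod_cast (show ‖(1:ℂ)‖₊ < ρ by
      simp only [nnnorm_one]
      exact_mod_cast (by simpa using hρ1 : (1:ℝ) < (ρ:ℝ)))
  have hderivF : deriv F 1 = (μ : ℂ) := by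
    have hFdball := hFball.fderiv
    have hds := hFdball.hasSum h1mem
    rw [zero_add] at hds
    have hds2 := (ContinuousLinearMap.apply ℂ ℂ (1:ℂ)).hasSum hds
    have hds3 : HasSum (fun n : ℕ => ((n:ℂ) + 1) * (f (n+1) : ℂ)) (fderiv ℂ F 1 1) := by
      apply hds2.congr_fun
      intro n
      simp only [ContinuousLinearMap.apply_apply]
      rw [pF.derivSeries_apply_diag n (1:ℂ)]
      rw [hpF, ofScalars_apply_eq]
      push_cast
      simp [smul_eq_mul]
    have hreal : HasSum (fun n : ℕ => (((n:ℝ) * f n : ℝ) : ℂ)) ((μ:ℝ) : ℂ) :=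
      Complex.ofRealCLM.hasSum hsum_nf.hasSum
    have hreal2 : HasSum (fun n : ℕ => ((((n+1:ℕ):ℝ) * f (n+1) : ℝ) : ℂ)) ((μ:ℝ) : ℂ) := by
      have h0 : ((((0:ℕ):ℝ) * f 0 : ℝ) : ℂ) = 0 := by simp
      have := (hasSum_nat_add_iff' (f := fun n : ℕ => (((n:ℝ) * f n : ℝ) : ℂ)) 1).mpr hreal
      simpa using this
    have hreal3 : HasSum (fun n : ℕ => ((n:ℂ) + 1) * (f (n+1) : ℂ)) ((μ:ℝ) : ℂ) := by
      apply hreal2.congr_fun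
      intro n
      push_cast
      ring
    have := hds3.unique hreal3
    rw [← this]
    rfl
  -- g and its dslope
  set g : ℂ → ℂ := fun z => 1 - F z with hgdef
  have hganal : ∀ z : ℂ, ‖z‖ < (ρ:ℝ) → AnalyticAt ℂ g z := by
    intro z hz
    have hz' : z ∈ Metric.eball (0:ℂ) ρ := by
      rw [Metric.mem_eball, edist_zero_right, enorm_eq_nnnorm]
      exact_mod_cast (show ‖z‖₊ < ρ by simpa [← NNReal.coe_lt_coe] using hz)
    exact analyticAt_const.sub (hFball.analyticAt_of_mem hz')
  have hg1 : g 1 = 0 := by rw [hgdef]; simp [hF1]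
  have hderivg : deriv g 1 = -(μ:ℂ) := by
    rw [hgdef]
    rw [deriv_const_sub, hderivF]
  -- q = dslope of g at 1
  set q : ℂ → ℂ := dslope g 1 with hqdef
  have hqanal1 : AnalyticAt ℂ q 1 := by
    obtain ⟨p, hp⟩ := hganal 1 (by simpa using hρ1)
    exact hp.has_fpower_series_dslope_fslope.analyticAt
  have hq1 : q 1 = -(μ:ℂ) := by rw [hqdef, dslope_same, hderivg]
  have hqne0 : q 1 ≠ 0 := by rw [hq1]; simpa using hμ0.ne'
  have hqslope : ∀ w : ℂ, w ≠ 1 → q w = (w - 1)⁻¹ * g w := by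
    intro w hw
    rw [hqdef, dslope_of_ne g hw, slope_def_field, hg1, sub_zero, div_eq_inv_mul]
  have hqanal : ∀ z : ℂ, ‖z‖ < (ρ:ℝ) → z ≠ 1 → AnalyticAt ℂ q z := by
    intro z hz hz1
    have h1 : AnalyticAt ℂ (fun w => (w - 1)⁻¹ * g w) z :=
      (((analyticAt_id.sub analyticAt_const).inv (sub_ne_zero.mpr hz1))).mul (hganal z hz)
    apply h1.congr
    filter_upwards [eventually_ne_nhds hz1] with w hw
    exact (hqslope w hw).symm
  -- m2 = dslope of μ + q at 1
  set m : ℂ → ℂ := fun w => (μ:ℂ) + q w with hmdef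
  have hm1 : m 1 = 0 := by rw [hmdef]; simp [hq1]
  set m2 : ℂ → ℂ := dslope m 1 with hm2def
  have hm2anal1 : AnalyticAt ℂ m2 1 := by
    obtain ⟨p, hp⟩ := analyticAt_const.add hqanal1
    exact hp.has_fpower_series_dslope_fslope.analyticAt
  have hm2slope : ∀ w : ℂ, w ≠ 1 → m2 w = (w - 1)⁻¹ * ((μ:ℂ) + q w) := by
    intro w hw
    rw [hm2def, dslope_of_ne m hw, slope_def_field, hm1, sub_zero, div_eq_inv_mul]
  have hm2anal : ∀ z : ℂ, ‖z‖ < (ρ:ℝ) → z ≠ 1 → AnalyticAt ℂ m2 z := by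
    intro z hz hz1
    have h1 : AnalyticAt ℂ (fun w => (w - 1)⁻¹ * ((μ:ℂ) + q w)) z :=
      (((analyticAt_id.sub analyticAt_const).inv (sub_ne_zero.mpr hz1))).mul
        (analyticAt_const.add (hqanal z hz hz1))
    apply h1.congr
    filter_upwards [eventually_ne_nhds hz1] with w hw
    exact (hm2slope w hw).symm
  -- choose the zero-free radius r
  obtain ⟨ε, hε0, hεq⟩ : ∃ ε > 0, ∀ w : ℂ, dist w 1 < ε → q w ≠ 0 := by
    have := hqanal1.continuousAt.eventually_ne hqne0
    rw [Metric.eventually_nhds_iff] at this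
    obtain ⟨ε, hε0, hε⟩ := this
    exact ⟨ε, hε0, fun w hw => hε hw⟩
  set r₀ : ℝ := (1 + ρ) / 2 with hr₀def
  have hr₀1 : 1 < r₀ := by rw [hr₀def]; linarith
  have hr₀ρ : r₀ < (ρ:ℝ) := by rw [hr₀def]; linarith
  have hkey : ∃ r : ℝ, 1 < r ∧ r < (ρ:ℝ) ∧ ∀ z : ℂ, ‖z‖ ≤ r → g z = 0 → z = 1 := by
    set K : Set ℂ := Metric.closedBall (0:ℂ) r₀ ∩ {z | ε ≤ dist z 1} with hKdef
    have hKclosed : IsClosed K :=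
      Metric.isClosed_closedBall.inter
        (isClosed_le continuous_const (continuous_id.dist continuous_const))
    have hKcomp : IsCompact K :=
      (isCompact_closedBall (0:ℂ) r₀).inter_right
        (isClosed_le continuous_const (continuous_id.dist continuous_const))
    have hgK : ContinuousOn g K := by
      intro z hz
      have hz' : ‖z‖ ≤ r₀ := by simpa [Metric.mem_closedBall, dist_zero_right] using hz.1
      exact ((hganal z (lt_of_le_of_lt hz' hr₀ρ)).continuousAt).continuousWithinAt
    set Z : Set ℂ := K ∩ g ⁻¹' {0} with hZdef
    have hZclosed : IsClosed Z := hgK.preimage_isClosed_of_isClosed hKclosed isClosed_singleton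
    have hZcomp : IsCompact Z := hKcomp.of_isClosed_subset hZclosed Set.inter_subset_left
    have hZgt1 : ∀ z ∈ Z, 1 < ‖z‖ := by
      rintro z ⟨⟨hz1, hz2⟩, hz3⟩
      simp only [Set.mem_preimage, Set.mem_singleton_iff] at hz3
      by_contra hle
      push_neg at hle
      have hFz : F z = 1 := by
        have : (1:ℂ) - F z = 0 := hz3
        linear_combination -this
      have := hFone z hle hFz
      rw [this] at hz2
      simp only [Set.mem_setOf_eq, dist_self] at hz2
      linarith
    rcases Set.eq_empty_or_nonempty Z with hZe | hZne
    · refine ⟨r₀, hr₀1, hr₀ρ, fun z hzr hzg => ?_⟩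
      by_cases hd : dist z 1 < ε
      · by_contra hz1
        exact hεq z hd (by rw [hqslope z hz1, hzg, mul_zero])
      · exfalso
        have : z ∈ Z := ⟨⟨by simpa [Metric.mem_closedBall, dist_zero_right] using hzr,
          by simpa using not_lt.mp hd⟩, by simpa using hzg⟩
        rw [hZe] at this
        exact this
    · obtain ⟨z₀, hz₀Z, hmin⟩ := hZcomp.exists_isMinOn hZne continuous_norm.continuousOn
      have hz₀1 : 1 < ‖z₀‖ := hZgt1 z₀ hz₀Z
      have hz₀r₀ : ‖z₀‖ ≤ r₀ := by
        have := hz₀Z.1.1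
        simpa [Metric.mem_closedBall, dist_zero_right] using this
      refine ⟨min r₀ ((1 + ‖z₀‖)/2), by rw [lt_min_iff]; constructor <;> linarith,
        lt_of_le_of_lt (min_le_left _ _) hr₀ρ, fun z hzr hzg => ?_⟩
      by_cases hd : dist z 1 < ε
      · by_contra hz1
        exact hεq z hd (by rw [hqslope z hz1, hzg, mul_zero])
      · exfalso
        have hzZ : z ∈ Z := ⟨⟨by
            simp only [Metric.mem_closedBall, dist_zero_right]
            exact le_trans hzr (min_le_left _ _),
          by simpa using not_lt.mp hd⟩, by simpa using hzg⟩
        have h1 := hmin hzZ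
        simp only [Set.mem_setOf_eq] at h1
        have h2 : ‖z‖ ≤ (1 + ‖z₀‖)/2 := le_trans hzr (min_le_right _ _)
        have : ‖z₀‖ ≤ ‖z‖ := h1
        linarith
  obtain ⟨r, hr1, hrρ, hrkey⟩ := hkey
  -- G is analytic on the closed ball of radius r
  set G : ℂ → ℂ := fun z => m2 z / ((μ:ℂ) * q z) with hGdef
  have hGanal : ∀ z : ℂ, ‖z‖ ≤ r → AnalyticAt ℂ G z := by
    intro z hzr
    by_cases hz1 : z = 1
    · subst hz1
      exact hm2anal1.div (analyticAt_const.mul hqanal1)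
        (by rw [hq1]; simp [hμ0.ne'])
    · have hzρ : ‖z‖ < (ρ:ℝ) := lt_of_le_of_lt hzr hrρ
      have hgz : g z ≠ 0 := fun h => hz1 (hrkey z hzr h)
      have hqz : q z ≠ 0 := by
        rw [hqslope z hz1]
        exact mul_ne_zero (inv_ne_zero (sub_ne_zero.mpr hz1)) hgz
      exact (hm2anal z hzρ hz1).div (analyticAt_const.mul (hqanal z hzρ hz1))
        (mul_ne_zero (by exact_mod_cast hμ0.ne') hqz)
  -- power series of G on ball r via Cauchy theory
  set rnn : ℝ≥0 := Real.toNNReal r with hrnndef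
  have hrnncoe : (rnn : ℝ) = r := Real.coe_toNNReal _ (by linarith)
  have hrnn0 : 0 < rnn := by
    rw [← NNReal.coe_lt_coe, hrnncoe, NNReal.coe_zero]
    linarith
  have hGdiff : DifferentiableOn ℂ G (Metric.closedBall 0 rnn) := by
    intro z hz
    rw [Metric.mem_closedBall, dist_zero_right, hrnncoe] at hz
    exact (hGanal z hz).differentiableAt.differentiableWithinAt
  have hGball : HasFPowerSeriesOnBall G (cauchyPowerSeries G 0 rnn) 0 rnn :=
    hGdiff.hasFPowerSeriesOnBall hrnn0
  -- the series with coefficients u n - μ⁻¹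
  set q1 : FormalMultilinearSeries ℂ ℂ ℂ :=
    ofScalars ℂ (fun n => (u n : ℂ) - ((μ:ℝ):ℂ)⁻¹) with hq1def
  have hq1rad : (1 : ℝ≥0∞) ≤ q1.radius := by
    apply q1.le_radius_of_bound 2
    intro n
    rw [hq1def, ofScalars_norm]
    simp only [NNReal.coe_one, one_pow, mul_one]
    calc ‖(u n : ℂ) - ((μ:ℝ):ℂ)⁻¹‖ ≤ ‖(u n : ℂ)‖ + ‖((μ:ℝ):ℂ)⁻¹‖ := norm_sub_le _ _
    _ ≤ 2 := by
        rw [Complex.norm_real, Real.norm_eq_abs, abs_of_nonneg (hu_mem n).1,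
          ← Complex.ofReal_inv, Complex.norm_real, Real.norm_eq_abs,
          abs_of_nonneg (by positivity)]
        have h1 : μ⁻¹ ≤ 1 := by
          rw [inv_le_one_iff₀]; right; exact hμ1
        linarith [(hu_mem n).2]
  -- G equals the u-series on the unit ball
  have hGeq : ∀ z : ℂ, ‖z‖ < 1 → HasSum (fun n => ((u n : ℂ) - ((μ:ℝ):ℂ)⁻¹) * z ^ n) (G z) := by
    intro z hz
    have hz1 : z ≠ 1 := by intro h; rw [h, norm_one] at hz; exact lt_irrefl _ hz
    have hgz : g z ≠ 0 := by
      intro h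
      exact hz1 (hrkey z (by linarith) h)
    have hUz : U z = (g z)⁻¹ := by
      have h1 : g z * U z = 1 := hren z hz
      exact eq_inv_of_mul_eq_one_right (by rw [mul_comm] at h1; rw [mul_comm]; exact h1)
    have hGz : G z = U z - ((μ:ℝ):ℂ)⁻¹ * (1 - z)⁻¹ := by
      rw [hGdef]
      simp only []
      rw [hm2slope z hz1, hqslope z hz1, hUz]
      have hz1' : z - 1 ≠ 0 := sub_ne_zero.mpr hz1
      have h1z : (1:ℂ) - z ≠ 0 := by
        intro h
        apply hz1'
        linear_combination -h
      have hμc : ((μ:ℝ):ℂ) ≠ 0 := by exact_mod_cast hμ0.ne'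
      field_simp
      ring
    rw [hGz]
    have h1 : HasSum (fun n => (u n : ℂ) * z ^ n) (U z) := hUsum z hz
    have h2 : HasSum (fun n => ((μ:ℝ):ℂ)⁻¹ * z ^ n) (((μ:ℝ):ℂ)⁻¹ * (1 - z)⁻¹) :=
      (hasSum_geometric_of_norm_lt_one hz).mul_left _
    have h3 := h1.sub h2
    apply h3.congr_fun
    intro n
    ring
  have hq1ball : HasFPowerSeriesOnBall G q1 0 1 := by
    refine ⟨hq1rad, one_pos, ?_⟩
    intro y hy
    rw [Metric.mem_eball, edist_zero_right, enorm_eq_nnnorm] at hy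
    have hy' : ‖y‖ < 1 := by
      have : ‖y‖₊ < 1 := by exact_mod_cast hy
      exact_mod_cast this
    have h1 := hGeq y hy'
    rw [zero_add]
    apply h1.congr_fun
    intro n
    rw [hq1def, ofScalars_apply_eq, smul_eq_mul]
  -- uniqueness of power series & final bound
  have hq1eq : q1 = cauchyPowerSeries G 0 rnn :=
    hq1ball.hasFPowerSeriesAt.eq_formalMultilinearSeries hGball.hasFPowerSeriesAt
  have hq1rad2 : (rnn : ℝ≥0∞) ≤ q1.radius := by rw [hq1eq]; exact hGball.r_le
  set s : ℝ := (1 + r) / 2 with hsdef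
  have hs1 : 1 < s := by rw [hsdef]; linarith
  have hsr : s < r := by rw [hsdef]; linarith
  set snn : ℝ≥0 := Real.toNNReal s with hsnndef
  have hsnncoe : (snn : ℝ) = s := Real.coe_toNNReal _ (by linarith)
  have hsnnrad : (snn : ℝ≥0∞) < q1.radius := by
    apply lt_of_lt_of_le _ hq1rad2
    rw [ENNReal.coe_lt_coe, ← NNReal.coe_lt_coe, hsnncoe, hrnncoe]
    exact hsr
  obtain ⟨c, hc0, hcb⟩ := q1.norm_mul_pow_le_of_lt_radius hsnnrad
  have final : ∃ c : ℝ, 0 < c ∧ ∃ θ₁ : ℝ, 0 < θ₁ ∧ θ₁ < 1 ∧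
      ∀ n : ℕ, |u n - 1 / μ| ≤ c * θ₁ ^ n := by
    refine ⟨c, hc0, s⁻¹, by positivity, inv_lt_one_of_one_lt₀ hs1, fun n => ?_⟩
    have h1 := hcb n
    rw [hq1def, ofScalars_norm, hsnncoe] at h1
    have h2 : ‖(u n : ℂ) - ((μ:ℝ):ℂ)⁻¹‖ = |u n - 1 / μ| := by
      rw [← Complex.ofReal_inv, ← Complex.ofReal_sub, Complex.norm_real, Real.norm_eq_abs,
        one_div]
    rw [h2] at h1
    rw [inv_pow, ← div_eq_mul_inv, le_div_iff₀ (by positivity)]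
    exact h1
  exact ⟨hsum_nf, final⟩
end

section
/- Let p be an irreducible stochastic matrix on a countable set S admitting a stationary distribution π. Then for every pair of states b₀, j ∈ S, π_j = π_{b₀} · Σ_{n=1}^{∞} p^{(n),{b₀}}_{b₀ j}; that is, π_j/π_{b₀} equals the expected number of visits to j during an excursion from b₀ back to b₀. (Identity used in the proof of Proposition 4.3.) -/
open scoped Classical
open ENNReal

namespace Stmt9

variable {S : Type*}

noncomputable def eQ (p : S → S → ℝ) : S → S → ℝ≥0∞ := fun i j => ENNReal.ofReal (p i j)

noncomputable def eT (p : S → S → ℝ) (B : Set S) : ℕ → S → S → ℝ≥0∞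
  | 0 => fun i j => if i = j then 1 else 0
  | 1 => fun i j => eQ p i j
  | n + 2 => fun i j => ∑' r : ↥Bᶜ, eQ p i (r : S) * eT p B (n + 1) (r : S) j

lemma tsum_subtype_le' (f : S → ℝ≥0∞) (s : Set S) : ∑' x : s, f (x : S) ≤ ∑' x, f x := by
  rw [tsum_subtype]
  exact ENNReal.tsum_le_tsum fun x => Set.indicator_le_self s f x

lemma tsum_split (f : S → ℝ≥0∞) (b : S) :
    ∑' i, f i = f b + ∑' i : ↥({b}ᶜ : Set S), f (i : S) := by
  rw [← Summable.tsum_add_tsum_compl (s := ({b} : Set S)) ENNReal.summable ENNReal.summable,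
    tsum_singleton]

lemma tsum_compl_empty (f : S → ℝ≥0∞) : ∑' x : ↥((∅ : Set S)ᶜ), f (x : S) = ∑' x, f x := by
  rw [tsum_subtype]
  simp [Set.compl_empty]

lemma eQ_ne_top (p : S → S → ℝ) (i j : S) : eQ p i j ≠ ∞ := ENNReal.ofReal_ne_top

section P

variable {p : S → S → ℝ}

lemma row_sum (hp0 : ∀ i j, 0 ≤ p i j) (hp1 : ∀ i, HasSum (fun j => p i j) 1) (i : S) :
    ∑' j, eQ p i j = 1 := by
  have h := (ENNReal.ofReal_tsum_of_nonneg (hp0 i) (hp1 i).summable).symm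
  rw [(hp1 i).tsum_eq] at h
  simpa [eQ] using h

lemma eQ_le_one (hp0 : ∀ i j, 0 ≤ p i j) (hp1 : ∀ i, HasSum (fun j => p i j) 1) (i j : S) :
    eQ p i j ≤ 1 := by
  have h := ENNReal.le_tsum (f := fun j => eQ p i j) j
  rwa [row_sum hp0 hp1 i] at h

lemma eT_le_one (hp0 : ∀ i j, 0 ≤ p i j) (hp1 : ∀ i, HasSum (fun j => p i j) 1)
    (B : Set S) : ∀ n (i j : S), eT p B n i j ≤ 1 := by
  intro n
  induction n using Nat.strong_induction_on with
  | _ n ih =>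
    match n with
    | 0 => intro i j; simp only [eT]; split <;> simp
    | 1 => intro i j; exact eQ_le_one hp0 hp1 i j
    | (k + 2) =>
      intro i j
      simp only [eT]
      calc ∑' r : ↥Bᶜ, eQ p i (r : S) * eT p B (k + 1) (r : S) j
          ≤ ∑' r : ↥Bᶜ, eQ p i (r : S) * 1 :=
            ENNReal.tsum_le_tsum fun r =>
              mul_le_mul_right (ih (k + 1) (by omega) (r : S) j) _
        _ = ∑' r : ↥Bᶜ, eQ p i (r : S) := by simp
        _ ≤ ∑' r : S, eQ p i r := tsum_subtype_le' _ _
        _ = 1 := row_sum hp0 hp1 i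

lemma eT_ne_top (hp0 : ∀ i j, 0 ≤ p i j) (hp1 : ∀ i, HasSum (fun j => p i j) 1)
    (B : Set S) (n : ℕ) (i j : S) : eT p B n i j ≠ ∞ :=
  ((eT_le_one hp0 hp1 B n i j).trans_lt ENNReal.one_lt_top).ne

lemma toReal_eT (hp0 : ∀ i j, 0 ≤ p i j) (hp1 : ∀ i, HasSum (fun j => p i j) 1)
    (B : Set S) : ∀ n (i j : S), tabooP p B n i j = (eT p B n i j).toReal := by
  intro n
  induction n using Nat.strong_induction_on with
  | _ n ih =>
    match n with
    | 0 =>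
      intro i j
      simp only [tabooP, eT]
      split <;> simp
    | 1 =>
      intro i j
      simp only [tabooP, eT, eQ]
      rw [ENNReal.toReal_ofReal (hp0 i j)]
    | (k + 2) =>
      intro i j
      simp only [tabooP, eT]
      rw [ENNReal.tsum_toReal_eq fun r : ↥Bᶜ =>
        ENNReal.mul_ne_top (eQ_ne_top p i (r : S)) (eT_ne_top hp0 hp1 B (k + 1) (r : S) j)]
      refine tsum_congr fun r => ?_
      rw [ENNReal.toReal_mul, ih (k + 1) (by omega) (r : S) j, eQ,
        ENNReal.toReal_ofReal (hp0 i r)]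

lemma eT_rec_last (p : S → S → ℝ) (B : Set S) :
    ∀ n (i j : S), eT p B (n + 2) i j = ∑' r : ↥Bᶜ, eT p B (n + 1) i (r : S) * eQ p (r : S) j := by
  intro n
  induction n with
  | zero => intro i j; simp only [eT]
  | succ k ih =>
    intro i j
    have h1 : eT p B (k + 3) i j = ∑' r : ↥Bᶜ, eQ p i (r : S) * eT p B (k + 2) (r : S) j := by
      simp only [eT]
    rw [h1]
    calc ∑' r : ↥Bᶜ, eQ p i (r : S) * eT p B (k + 2) (r : S) j
        = ∑' r : ↥Bᶜ, ∑' s : ↥Bᶜ, eQ p i (r : S) * (eT p B (k + 1) (r : S) (s : S) * eQ p (s : S) j) := by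
          refine tsum_congr fun r => ?_
          rw [ih (r : S) j, ENNReal.tsum_mul_left]
      _ = ∑' s : ↥Bᶜ, ∑' r : ↥Bᶜ, eQ p i (r : S) * (eT p B (k + 1) (r : S) (s : S) * eQ p (s : S) j) :=
          ENNReal.tsum_comm
      _ = ∑' s : ↥Bᶜ, (∑' r : ↥Bᶜ, eQ p i (r : S) * eT p B (k + 1) (r : S) (s : S)) * eQ p (s : S) j := by
          refine tsum_congr fun s => ?_
          simp_rw [← mul_assoc]
          rw [ENNReal.tsum_mul_right]
      _ = ∑' s : ↥Bᶜ, eT p B (k + 2) i (s : S) * eQ p (s : S) j := by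
          refine tsum_congr fun s => ?_
          simp only [eT]

end P

section Pi

variable {p : S → S → ℝ} {π : S → ℝ}

noncomputable def ePi (π : S → ℝ) : S → ℝ≥0∞ := fun i => ENNReal.ofReal (π i)

lemma ePi_ne_top (π : S → ℝ) (i : S) : ePi π i ≠ ∞ := ENNReal.ofReal_ne_top

lemma ePi_sum (hπ0 : ∀ j, 0 ≤ π j) (hπs : HasSum π 1) : ∑' i, ePi π i = 1 := by
  have h := (ENNReal.ofReal_tsum_of_nonneg hπ0 hπs.summable).symm
  rw [hπs.tsum_eq] at h
  simpa [ePi] using h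

lemma eStat (hp0 : ∀ i j, 0 ≤ p i j) (hπ0 : ∀ j, 0 ≤ π j)
    (hπ_stat : ∀ j, HasSum (fun i => π i * p i j) (π j)) (j : S) :
    ∑' i, ePi π i * eQ p i j = ePi π j := by
  have h := (ENNReal.ofReal_tsum_of_nonneg (fun i => mul_nonneg (hπ0 i) (hp0 i j))
    (hπ_stat j).summable).symm
  rw [(hπ_stat j).tsum_eq] at h
  calc ∑' i, ePi π i * eQ p i j
      = ∑' i, ENNReal.ofReal (π i * p i j) :=
        tsum_congr fun i => (ENNReal.ofReal_mul (hπ0 i)).symm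
    _ = ENNReal.ofReal (π j) := h

lemma eStat_n (hp0 : ∀ i j, 0 ≤ p i j) (hπ0 : ∀ j, 0 ≤ π j)
    (hπ_stat : ∀ j, HasSum (fun i => π i * p i j) (π j)) :
    ∀ n (j : S), ∑' i, ePi π i * eT p (∅ : Set S) (n + 1) i j = ePi π j := by
  intro n
  induction n with
  | zero =>
    intro j
    have : ∀ i, eT p (∅ : Set S) 1 i j = eQ p i j := fun i => by simp only [eT]
    simp only [this]
    exact eStat hp0 hπ0 hπ_stat j
  | succ k ih =>
    intro j
    calc ∑' i, ePi π i * eT p (∅ : Set S) (k + 2) i j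
        = ∑' i, ∑' r : S, ePi π i * (eQ p i r * eT p (∅ : Set S) (k + 1) r j) := by
          refine tsum_congr fun i => ?_
          have h1 : eT p (∅ : Set S) (k + 2) i j
              = ∑' r : S, eQ p i r * eT p (∅ : Set S) (k + 1) r j := by
            simp only [eT]
            exact tsum_compl_empty (fun r => eQ p i r * eT p (∅ : Set S) (k + 1) r j)
          rw [h1, ENNReal.tsum_mul_left]
      _ = ∑' r : S, ∑' i, ePi π i * (eQ p i r * eT p (∅ : Set S) (k + 1) r j) :=
          ENNReal.tsum_comm
      _ = ∑' r : S, (∑' i, ePi π i * eQ p i r) * eT p (∅ : Set S) (k + 1) r j := by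
          refine tsum_congr fun r => ?_
          simp_rw [← mul_assoc]
          rw [ENNReal.tsum_mul_right]
      _ = ∑' r : S, ePi π r * eT p (∅ : Set S) (k + 1) r j := by
          refine tsum_congr fun r => ?_
          rw [eStat hp0 hπ0 hπ_stat r]
      _ = ePi π j := ih j

lemma ePi_pos (hp0 : ∀ i j, 0 ≤ p i j) (hp1 : ∀ i, HasSum (fun j => p i j) 1)
    (hirr : ∀ i j, ∃ n, 1 ≤ n ∧ 0 < nstep p n i j)
    (hπ0 : ∀ j, 0 ≤ π j) (hπs : HasSum π 1)
    (hπ_stat : ∀ j, HasSum (fun i => π i * p i j) (π j)) (j : S) :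
    ePi π j ≠ 0 := by
  obtain ⟨i₀, hi₀⟩ : ∃ i₀, π i₀ ≠ 0 := by
    by_contra h
    push_neg at h
    have h0 : HasSum π 0 := by
      have : π = fun _ => 0 := funext h
      rw [this]
      exact hasSum_zero
    exact one_ne_zero (hπs.unique h0)
  obtain ⟨n, hn, hpos⟩ := hirr i₀ j
  obtain ⟨k, rfl⟩ : ∃ k, n = k + 1 := ⟨n - 1, by omega⟩
  have hTne : eT p (∅ : Set S) (k + 1) i₀ j ≠ 0 := by
    intro h
    rw [nstep, toReal_eT hp0 hp1, h] at hpos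
    simp at hpos
  have hle := ENNReal.le_tsum (f := fun i => ePi π i * eT p (∅ : Set S) (k + 1) i j) i₀
  rw [eStat_n hp0 hπ0 hπ_stat k j] at hle
  intro h
  rw [h] at hle
  have : ePi π i₀ * eT p (∅ : Set S) (k + 1) i₀ j = 0 := le_antisymm hle zero_le
  rcases mul_eq_zero.mp this with h' | h'
  · exact hi₀ (by simpa [ePi, ENNReal.ofReal_eq_zero] using le_antisymm (ENNReal.ofReal_eq_zero.mp h') (hπ0 i₀))
  · exact hTne h'

lemma taboo_pos (hp0 : ∀ i j, 0 ≤ p i j) (hp1 : ∀ i, HasSum (fun j => p i j) 1) (b₀ : S) :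
    ∀ n (i : S), i ≠ b₀ → eT p (∅ : Set S) n b₀ i ≠ 0 →
      ∃ m, eT p ({b₀} : Set S) (m + 1) b₀ i ≠ 0 := by
  intro n
  induction n using Nat.strong_induction_on with
  | _ n ih =>
    match n with
    | 0 =>
      intro i hi h0
      exfalso
      apply h0
      simp only [eT]
      rw [if_neg (fun h => hi h.symm)]
    | 1 =>
      intro i hi h0
      exact ⟨0, by simpa only [eT] using h0⟩
    | (k + 2) =>
      intro i hi h0
      rw [eT_rec_last] at h0
      obtain ⟨r, hr⟩ : ∃ r : ↥((∅ : Set S)ᶜ),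
          eT p (∅ : Set S) (k + 1) b₀ (r : S) * eQ p (r : S) i ≠ 0 := by
        by_contra h
        push_neg at h
        exact h0 (ENNReal.tsum_eq_zero.mpr h)
      have h1 : eT p (∅ : Set S) (k + 1) b₀ (r : S) ≠ 0 := fun h => hr (by rw [h, zero_mul])
      have h2 : eQ p (r : S) i ≠ 0 := fun h => hr (by rw [h, mul_zero])
      by_cases hc : (r : S) = b₀
      · refine ⟨0, ?_⟩
        have he : eT p ({b₀} : Set S) 1 b₀ i = eQ p b₀ i := by simp only [eT]
        rw [he, ← hc]
        exact h2
      · obtain ⟨m, hm⟩ := ih (k + 1) (by omega) (r : S) hc h1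
        refine ⟨m + 1, ?_⟩
        rw [eT_rec_last]
        intro hzero
        rw [ENNReal.tsum_eq_zero] at hzero
        have hmem : (r : S) ∈ ({b₀} : Set S)ᶜ := by simpa using hc
        have := hzero ⟨(r : S), hmem⟩
        exact absurd this (mul_ne_zero hm h2)

end Pi

section A

variable {p : S → S → ℝ} {π : S → ℝ}

noncomputable def aE (p : S → S → ℝ) (b₀ : S) (M : ℕ) (i : S) : ℝ≥0∞ :=
  ∑' j : ↥(({b₀} : Set S)ᶜ), eT p ({b₀} : Set S) M i (j : S)

lemma aE_one_le_one (hp0 : ∀ i j, 0 ≤ p i j) (hp1 : ∀ i, HasSum (fun j => p i j) 1)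
    (b₀ i : S) : aE p b₀ 1 i ≤ 1 := by
  have h : aE p b₀ 1 i = ∑' j : ↥(({b₀} : Set S)ᶜ), eQ p i (j : S) := by
    refine tsum_congr fun jj => ?_
    simp only [eT]
  rw [h]
  exact (tsum_subtype_le' _ _).trans (le_of_eq (row_sum hp0 hp1 i))

lemma aE_step (hp0 : ∀ i j, 0 ≤ p i j) (hp1 : ∀ i, HasSum (fun j => p i j) 1)
    (b₀ : S) (M : ℕ) (i : S) : aE p b₀ (M + 2) i ≤ aE p b₀ (M + 1) i := by
  have h : aE p b₀ (M + 2) i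
      = ∑' jj : ↥(({b₀} : Set S)ᶜ), ∑' r : ↥(({b₀} : Set S)ᶜ),
          eT p ({b₀} : Set S) (M + 1) i (r : S) * eQ p (r : S) (jj : S) :=
    tsum_congr fun jj => eT_rec_last p ({b₀} : Set S) M i (jj : S)
  rw [h, ENNReal.tsum_comm]
  calc ∑' r : ↥(({b₀} : Set S)ᶜ), ∑' jj : ↥(({b₀} : Set S)ᶜ),
          eT p ({b₀} : Set S) (M + 1) i (r : S) * eQ p (r : S) (jj : S)
      = ∑' r : ↥(({b₀} : Set S)ᶜ), eT p ({b₀} : Set S) (M + 1) i (r : S)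
          * ∑' jj : ↥(({b₀} : Set S)ᶜ), eQ p (r : S) (jj : S) := by
        refine tsum_congr fun r => ?_
        rw [ENNReal.tsum_mul_left]
    _ ≤ ∑' r : ↥(({b₀} : Set S)ᶜ), eT p ({b₀} : Set S) (M + 1) i (r : S) * 1 := by
        refine ENNReal.tsum_le_tsum fun r => mul_le_mul_right ?_ _
        exact (tsum_subtype_le' _ _).trans (le_of_eq (row_sum hp0 hp1 (r : S)))
    _ = aE p b₀ (M + 1) i := by simp [aE]

lemma aE_anti (hp0 : ∀ i j, 0 ≤ p i j) (hp1 : ∀ i, HasSum (fun j => p i j) 1)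
    (b₀ i : S) : ∀ {k l : ℕ}, k ≤ l → aE p b₀ (l + 1) i ≤ aE p b₀ (k + 1) i := by
  intro k l h
  induction l, h using Nat.le_induction with
  | base => exact le_rfl
  | succ n hn ih => exact (aE_step hp0 hp1 b₀ n i).trans ih

lemma aE_le_one (hp0 : ∀ i j, 0 ≤ p i j) (hp1 : ∀ i, HasSum (fun j => p i j) 1)
    (b₀ : S) (M : ℕ) (i : S) : aE p b₀ (M + 1) i ≤ 1 :=
  (aE_anti hp0 hp1 b₀ i (Nat.zero_le M)).trans (aE_one_le_one hp0 hp1 b₀ i)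

lemma aE_rec_first (p : S → S → ℝ) (b₀ : S) (M : ℕ) (i : S) :
    aE p b₀ (M + 2) i
      = ∑' r : ↥(({b₀} : Set S)ᶜ), eQ p i (r : S) * aE p b₀ (M + 1) (r : S) := by
  have h : aE p b₀ (M + 2) i
      = ∑' jj : ↥(({b₀} : Set S)ᶜ), ∑' r : ↥(({b₀} : Set S)ᶜ),
          eQ p i (r : S) * eT p ({b₀} : Set S) (M + 1) (r : S) (jj : S) :=
    tsum_congr fun jj => by simp only [eT]
  rw [h, ENNReal.tsum_comm]
  refine tsum_congr fun r => ?_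
  rw [ENNReal.tsum_mul_left]
  rfl

lemma aE_split (p : S → S → ℝ) (b₀ : S) :
    ∀ N M (i : S), aE p b₀ ((N + 1) + (M + 1)) i
      = ∑' r : ↥(({b₀} : Set S)ᶜ), eT p ({b₀} : Set S) (N + 1) i (r : S) * aE p b₀ (M + 1) (r : S) := by
  intro N
  induction N with
  | zero =>
    intro M i
    have h : (0 + 1) + (M + 1) = M + 2 := by omega
    rw [h, aE_rec_first]
    refine tsum_congr fun r => ?_
    simp only [eT]
  | succ k ih =>
    intro M i
    have h : (k + 1 + 1) + (M + 1) = (k + M + 1) + 2 := by omega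
    rw [h, aE_rec_first]
    have h2 : (k + M + 1) + 1 = (k + 1) + (M + 1) := by omega
    calc ∑' r : ↥(({b₀} : Set S)ᶜ), eQ p i (r : S) * aE p b₀ ((k + M + 1) + 1) (r : S)
        = ∑' r : ↥(({b₀} : Set S)ᶜ), ∑' s : ↥(({b₀} : Set S)ᶜ),
            eQ p i (r : S) * (eT p ({b₀} : Set S) (k + 1) (r : S) (s : S) * aE p b₀ (M + 1) (s : S)) := by
          refine tsum_congr fun r => ?_
          rw [h2, ih M (r : S), ENNReal.tsum_mul_left]
      _ = ∑' s : ↥(({b₀} : Set S)ᶜ), ∑' r : ↥(({b₀} : Set S)ᶜ),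
            eQ p i (r : S) * (eT p ({b₀} : Set S) (k + 1) (r : S) (s : S) * aE p b₀ (M + 1) (s : S)) :=
          ENNReal.tsum_comm
      _ = ∑' s : ↥(({b₀} : Set S)ᶜ),
            (∑' r : ↥(({b₀} : Set S)ᶜ), eQ p i (r : S) * eT p ({b₀} : Set S) (k + 1) (r : S) (s : S))
              * aE p b₀ (M + 1) (s : S) := by
          refine tsum_congr fun s => ?_
          simp_rw [← mul_assoc]
          rw [ENNReal.tsum_mul_right]
      _ = ∑' s : ↥(({b₀} : Set S)ᶜ),
            eT p ({b₀} : Set S) (k + 2) i (s : S) * aE p b₀ (M + 1) (s : S) := by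
          refine tsum_congr fun s => ?_
          simp only [eT]

lemma eT_le_aE (hp0 : ∀ i j, 0 ≤ p i j) (hp1 : ∀ i, HasSum (fun j => p i j) 1)
    (b₀ : S) (K : ℕ) (i j : S) : eT p ({b₀} : Set S) (K + 2) i j ≤ aE p b₀ (K + 1) i := by
  rw [eT_rec_last]
  calc ∑' r : ↥(({b₀} : Set S)ᶜ), eT p ({b₀} : Set S) (K + 1) i (r : S) * eQ p (r : S) j
      ≤ ∑' r : ↥(({b₀} : Set S)ᶜ), eT p ({b₀} : Set S) (K + 1) i (r : S) * 1 :=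
        ENNReal.tsum_le_tsum fun r => mul_le_mul_right (eQ_le_one hp0 hp1 _ _) _
    _ = aE p b₀ (K + 1) i := by simp [aE]

noncomputable def cE (p : S → S → ℝ) (π : S → ℝ) (b₀ : S) (M : ℕ) : ℝ≥0∞ :=
  ∑' i : ↥(({b₀} : Set S)ᶜ), ePi π i * aE p b₀ M (i : S)

lemma cE_le_one (hp0 : ∀ i j, 0 ≤ p i j) (hp1 : ∀ i, HasSum (fun j => p i j) 1)
    (hπ0 : ∀ j, 0 ≤ π j) (hπs : HasSum π 1) (b₀ : S) (M : ℕ) :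
    cE p π b₀ (M + 1) ≤ 1 := by
  calc cE p π b₀ (M + 1)
      ≤ ∑' i : ↥(({b₀} : Set S)ᶜ), ePi π i := by
        refine ENNReal.tsum_le_tsum fun i => ?_
        exact mul_le_of_le_one_right' (aE_le_one hp0 hp1 b₀ M (i : S))
    _ ≤ ∑' i : S, ePi π i := tsum_subtype_le' _ _
    _ = 1 := ePi_sum hπ0 hπs

lemma cE_rec (hp0 : ∀ i j, 0 ≤ p i j) (hπ0 : ∀ j, 0 ≤ π j)
    (hπ_stat : ∀ j, HasSum (fun i => π i * p i j) (π j)) (b₀ : S) (M : ℕ) :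
    ePi π b₀ * aE p b₀ (M + 2) b₀ + cE p π b₀ (M + 2) = cE p π b₀ (M + 1) := by
  have hfull : ∑' i : S, ePi π i * aE p b₀ (M + 2) i = cE p π b₀ (M + 1) := by
    calc ∑' i : S, ePi π i * aE p b₀ (M + 2) i
        = ∑' i : S, ∑' r : ↥(({b₀} : Set S)ᶜ),
            ePi π i * (eQ p i (r : S) * aE p b₀ (M + 1) (r : S)) := by
          refine tsum_congr fun i => ?_
          rw [aE_rec_first, ENNReal.tsum_mul_left]
      _ = ∑' r : ↥(({b₀} : Set S)ᶜ), ∑' i : S,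
            ePi π i * (eQ p i (r : S) * aE p b₀ (M + 1) (r : S)) := ENNReal.tsum_comm
      _ = ∑' r : ↥(({b₀} : Set S)ᶜ),
            (∑' i : S, ePi π i * eQ p i (r : S)) * aE p b₀ (M + 1) (r : S) := by
          refine tsum_congr fun r => ?_
          simp_rw [← mul_assoc]
          rw [ENNReal.tsum_mul_right]
      _ = cE p π b₀ (M + 1) := by
          refine tsum_congr fun r => ?_
          rw [eStat hp0 hπ0 hπ_stat (r : S)]
  rw [← hfull, tsum_split (fun i => ePi π i * aE p b₀ (M + 2) i) b₀]
  rfl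

lemma cE_tele (hp0 : ∀ i j, 0 ≤ p i j) (hπ0 : ∀ j, 0 ≤ π j)
    (hπ_stat : ∀ j, HasSum (fun i => π i * p i j) (π j)) (b₀ : S) (K : ℕ) :
    (∑ M ∈ Finset.range K, ePi π b₀ * aE p b₀ (M + 2) b₀) + cE p π b₀ (K + 1) = cE p π b₀ 1 := by
  induction K with
  | zero => simp
  | succ k ih =>
    rw [Finset.sum_range_succ, add_assoc]
    have h := cE_rec hp0 hπ0 hπ_stat b₀ k
    rw [show k + 1 + 1 = k + 2 from rfl, h]
    exact ih

end A

section B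

variable {p : S → S → ℝ} {π : S → ℝ}

lemma inf_aE_b0 (hp0 : ∀ i j, 0 ≤ p i j) (hp1 : ∀ i, HasSum (fun j => p i j) 1)
    (hπ0 : ∀ j, 0 ≤ π j) (hπs : HasSum π 1)
    (hπ_stat : ∀ j, HasSum (fun i => π i * p i j) (π j))
    (b₀ : S) (hb0 : ePi π b₀ ≠ 0) :
    ⨅ M, aE p b₀ (M + 1) b₀ = 0 := by
  by_contra hδ
  set δ := ⨅ M, aE p b₀ (M + 1) b₀ with hδdef
  have hsum_le : ∑' M : ℕ, ePi π b₀ * aE p b₀ (M + 2) b₀ ≤ cE p π b₀ 1 := by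
    refine tsum_le_of_sum_range_le (fun K => ?_)
    rw [← cE_tele hp0 hπ0 hπ_stat b₀ K]
    exact le_self_add
  have hterm : ∀ M : ℕ, ePi π b₀ * δ ≤ ePi π b₀ * aE p b₀ (M + 2) b₀ := fun M =>
    mul_le_mul_right (iInf_le _ (M + 1)) _
  have htop : (∞ : ℝ≥0∞) ≤ cE p π b₀ 1 := by
    rw [← tsum_const_eq_top_of_ne_zero (α := ℕ) (mul_ne_zero hb0 hδ)]
    exact (ENNReal.tsum_le_tsum hterm).trans hsum_le
  have : (∞ : ℝ≥0∞) ≤ 1 := htop.trans (cE_le_one hp0 hp1 hπ0 hπs b₀ 0)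
  simp at this

lemma inf_aE (hp0 : ∀ i j, 0 ≤ p i j) (hp1 : ∀ i, HasSum (fun j => p i j) 1)
    (hirr : ∀ i j, ∃ n, 1 ≤ n ∧ 0 < nstep p n i j)
    (hπ0 : ∀ j, 0 ≤ π j) (hπs : HasSum π 1)
    (hπ_stat : ∀ j, HasSum (fun i => π i * p i j) (π j))
    (b₀ : S) (hb0 : ePi π b₀ ≠ 0) (i : S) :
    ⨅ M, aE p b₀ (M + 1) i = 0 := by
  by_cases hib : i = b₀
  · rw [hib]; exact inf_aE_b0 hp0 hp1 hπ0 hπs hπ_stat b₀ hb0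
  · obtain ⟨n, hn, hpos⟩ := hirr b₀ i
    obtain ⟨k, rfl⟩ : ∃ k, n = k + 1 := ⟨n - 1, by omega⟩
    have hTne : eT p (∅ : Set S) (k + 1) b₀ i ≠ 0 := by
      intro h
      rw [nstep, toReal_eT hp0 hp1, h] at hpos
      simp at hpos
    obtain ⟨m, hm⟩ := taboo_pos hp0 hp1 b₀ (k + 1) i hib hTne
    have hmem : i ∈ ({b₀} : Set S)ᶜ := by simpa using hib
    have key : ∀ M : ℕ, eT p ({b₀} : Set S) (m + 1) b₀ i * aE p b₀ (M + 1) i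
        ≤ aE p b₀ (M + 2) b₀ := by
      intro M
      have hsplit := aE_split p b₀ m M b₀
      have hterm := ENNReal.le_tsum
        (f := fun r : ↥(({b₀} : Set S)ᶜ) =>
          eT p ({b₀} : Set S) (m + 1) b₀ (r : S) * aE p b₀ (M + 1) (r : S)) ⟨i, hmem⟩
      rw [← hsplit] at hterm
      refine hterm.trans ?_
      have harith : (m + 1) + (M + 1) = (m + M + 1) + 1 := by omega
      rw [harith]
      exact aE_anti hp0 hp1 b₀ b₀ (by omega : M + 1 ≤ m + M + 1)
    have hzero : eT p ({b₀} : Set S) (m + 1) b₀ i * ⨅ M, aE p b₀ (M + 1) i = 0 := by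
      refine le_antisymm ?_ zero_le
      calc eT p ({b₀} : Set S) (m + 1) b₀ i * ⨅ M, aE p b₀ (M + 1) i
          ≤ ⨅ M, aE p b₀ (M + 2) b₀ :=
            le_iInf fun M => (mul_le_mul_right (iInf_le _ M) _).trans (key M)
        _ ≤ ⨅ M, aE p b₀ (M + 1) b₀ := le_iInf fun M =>
            (iInf_le (fun K => aE p b₀ (K + 2) b₀) M).trans (aE_step hp0 hp1 b₀ M b₀)
        _ = 0 := inf_aE_b0 hp0 hp1 hπ0 hπs hπ_stat b₀ hb0
    exact (mul_eq_zero.mp hzero).resolve_left hm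

lemma inf_tsum_zero {ι : Type*} (g : ι → ℝ≥0∞) (a : ℕ → ι → ℝ≥0∞)
    (hg : ∑' i, g i ≤ 1) (ha1 : ∀ M i, a M i ≤ 1)
    (hanti : ∀ (i : ι) {k l : ℕ}, k ≤ l → a l i ≤ a k i)
    (hinf : ∀ i, ⨅ M, a M i = 0) :
    ⨅ M, ∑' i, g i * a M i = 0 := by
  refine le_antisymm ?_ zero_le
  refine ENNReal.le_of_forall_pos_le_add fun ε hε _ => ?_
  rw [zero_add]
  have hε' : (ε : ℝ≥0∞) ≠ 0 := by simpa using hε.ne'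
  have hhalf : (0 : ℝ≥0∞) < (ε : ℝ≥0∞) / 2 := ENNReal.half_pos hε'
  have hne : ∑' i, g i ≠ ∞ := (hg.trans_lt ENNReal.one_lt_top).ne
  obtain ⟨s, hs⟩ := ((tendsto_order.1 (tendsto_tsum_compl_atTop_zero hne)).2
    ((ε : ℝ≥0∞) / 2) hhalf).exists
  classical
  have hMi : ∀ i : ι, ∃ M : ℕ, a M i < (ε : ℝ≥0∞) / 2 := fun i =>
    iInf_lt_iff.mp ((hinf i) ▸ hhalf)
  choose Mi hMi' using hMi
  obtain ⟨M, hMle⟩ : ∃ M : ℕ, ∀ i ∈ s, Mi i ≤ M :=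
    ⟨s.sup Mi, fun i hi => Finset.le_sup hi⟩
  have hkey : ∀ i ∈ s, a M i ≤ (ε : ℝ≥0∞) / 2 := fun i hi =>
    (hanti i (hMle i hi)).trans (hMi' i).le
  have hsum1 : ∑ i ∈ s, g i ≤ 1 := (ENNReal.sum_le_tsum s).trans hg
  calc ⨅ K, ∑' i, g i * a K i
      ≤ ∑' i, g i * a M i := iInf_le _ M
    _ = ∑ i ∈ s, g i * a M i
        + ∑' i : ↥((↑s : Set ι)ᶜ), g (i : ι) * a M (i : ι) := by
        rw [← Summable.tsum_add_tsum_compl (s := (↑s : Set ι)) ENNReal.summable ENNReal.summable,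
          Finset.tsum_subtype' s (fun i => g i * a M i)]
    _ ≤ ∑ i ∈ s, g i * ((ε : ℝ≥0∞) / 2)
        + ∑' i : ↥((↑s : Set ι)ᶜ), g (i : ι) :=
        add_le_add (Finset.sum_le_sum fun i hi => mul_le_mul_right (hkey i hi) _)
          (ENNReal.tsum_le_tsum fun i => mul_le_of_le_one_right' (ha1 M _))
    _ ≤ 1 * ((ε : ℝ≥0∞) / 2) + (ε : ℝ≥0∞) / 2 := by
        refine add_le_add ?_ ?_
        · rw [← Finset.sum_mul]
          exact mul_le_mul_left hsum1 _
        · exact hs.le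
    _ = (ε : ℝ≥0∞) := by rw [one_mul, ENNReal.add_halves]

lemma inf_cE (hp0 : ∀ i j, 0 ≤ p i j) (hp1 : ∀ i, HasSum (fun j => p i j) 1)
    (hirr : ∀ i j, ∃ n, 1 ≤ n ∧ 0 < nstep p n i j)
    (hπ0 : ∀ j, 0 ≤ π j) (hπs : HasSum π 1)
    (hπ_stat : ∀ j, HasSum (fun i => π i * p i j) (π j))
    (b₀ : S) (hb0 : ePi π b₀ ≠ 0) :
    ⨅ M, cE p π b₀ (M + 1) = 0 := by
  have hPiT : ∑' i : ↥(({b₀} : Set S)ᶜ), ePi π i ≤ 1 :=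
    (tsum_subtype_le' _ _).trans (le_of_eq (ePi_sum hπ0 hπs))
  exact inf_tsum_zero (fun i : ↥(({b₀} : Set S)ᶜ) => ePi π (i : S))
    (fun M i => aE p b₀ (M + 1) (i : S)) hPiT
    (fun M i => aE_le_one hp0 hp1 b₀ M (i : S))
    (fun i _ _ h => aE_anti hp0 hp1 b₀ (i : S) h)
    (fun i => inf_aE hp0 hp1 hirr hπ0 hπs hπ_stat b₀ hb0 (i : S))

end B

end Stmt9

/-- Identity used in the proof of Proposition 4.3: for an irreducible chain with stationary
distribution `π`, `π_j = π_{b₀} Σ_{n ≥ 1} p^{(n),{b₀}}_{b₀ j}`, i.e. `π_j / π_{b₀}` is the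
expected number of visits to `j` during an excursion from `b₀` back to `b₀`. -/
theorem stmt_9 {S : Type*} [Countable S] (p : S → S → ℝ)
    (hp_nonneg : ∀ i j, 0 ≤ p i j)
    (hp_row : ∀ i, HasSum (fun j => p i j) 1)
    (hirr : ∀ i j, ∃ n, 1 ≤ n ∧ 0 < nstep p n i j)
    (π : S → ℝ) (hπ_nonneg : ∀ j, 0 ≤ π j) (hπ_sum : HasSum π 1)
    (hπ_stat : ∀ j, HasSum (fun i => π i * p i j) (π j)) :
    ∀ b₀ j : S, π j = π b₀ * ∑' n : ℕ, tabooP p ({b₀} : Set S) (n + 1) b₀ j := by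
  intro b₀ j
  open Stmt9 in
  have hb0 : ePi π b₀ ≠ 0 :=
    ePi_pos hp_nonneg hp_row hirr hπ_nonneg hπ_sum hπ_stat b₀
  set F : ℕ → ℝ≥0∞ := fun n => Stmt9.eT p ({b₀} : Set S) (n + 1) b₀ j with hF
  set RR : ℕ → ℝ≥0∞ := fun K => ∑' i : ↥(({b₀} : Set S)ᶜ),
    Stmt9.ePi π (i : S) * Stmt9.eT p ({b₀} : Set S) (K + 1) (i : S) j with hRR
  have hF0 : ∀ i : S, Stmt9.eT p ({b₀} : Set S) 1 i j = Stmt9.eQ p i j := fun i => by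
    simp only [Stmt9.eT]
  have step : ∀ N, RR N = Stmt9.ePi π b₀ * F (N + 1) + RR (N + 1) := by
    intro N
    have hfull : RR N = ∑' k : S, Stmt9.ePi π k * Stmt9.eT p ({b₀} : Set S) (N + 2) k j := by
      simp only [hRR]
      calc ∑' i : ↥(({b₀} : Set S)ᶜ),
            Stmt9.ePi π (i : S) * Stmt9.eT p ({b₀} : Set S) (N + 1) (i : S) j
          = ∑' i : ↥(({b₀} : Set S)ᶜ),
              (∑' k : S, Stmt9.ePi π k * Stmt9.eQ p k (i : S))
                * Stmt9.eT p ({b₀} : Set S) (N + 1) (i : S) j := by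
            refine tsum_congr fun i => ?_
            rw [Stmt9.eStat hp_nonneg hπ_nonneg hπ_stat (i : S)]
        _ = ∑' i : ↥(({b₀} : Set S)ᶜ), ∑' k : S,
              Stmt9.ePi π k * (Stmt9.eQ p k (i : S)
                * Stmt9.eT p ({b₀} : Set S) (N + 1) (i : S) j) := by
            refine tsum_congr fun i => ?_
            rw [← ENNReal.tsum_mul_right]
            exact tsum_congr fun k => by ring
        _ = ∑' k : S, ∑' i : ↥(({b₀} : Set S)ᶜ),
              Stmt9.ePi π k * (Stmt9.eQ p k (i : S)
                * Stmt9.eT p ({b₀} : Set S) (N + 1) (i : S) j) := ENNReal.tsum_comm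
        _ = ∑' k : S, Stmt9.ePi π k * ∑' i : ↥(({b₀} : Set S)ᶜ),
              Stmt9.eQ p k (i : S) * Stmt9.eT p ({b₀} : Set S) (N + 1) (i : S) j := by
            refine tsum_congr fun k => ?_
            rw [ENNReal.tsum_mul_left]
        _ = ∑' k : S, Stmt9.ePi π k * Stmt9.eT p ({b₀} : Set S) (N + 2) k j := by
            refine tsum_congr fun k => ?_
            simp only [Stmt9.eT]
    rw [hfull, Stmt9.tsum_split
      (fun k => Stmt9.ePi π k * Stmt9.eT p ({b₀} : Set S) (N + 2) k j) b₀]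
  have main_id : ∀ N, Stmt9.ePi π j
      = Stmt9.ePi π b₀ * (∑ n ∈ Finset.range (N + 1), F n) + RR N := by
    intro N
    induction N with
    | zero =>
      have h := (Stmt9.eStat hp_nonneg hπ_nonneg hπ_stat j).symm
      rw [Stmt9.tsum_split (fun i => Stmt9.ePi π i * Stmt9.eQ p i j) b₀] at h
      simp only [hF, hRR, zero_add, Finset.sum_range_one, hF0]
      exact h
    | succ N ih =>
      calc Stmt9.ePi π j
          = Stmt9.ePi π b₀ * (∑ n ∈ Finset.range (N + 1), F n) + RR N := ih
        _ = Stmt9.ePi π b₀ * (∑ n ∈ Finset.range (N + 1), F n)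
            + (Stmt9.ePi π b₀ * F (N + 1) + RR (N + 1)) := by rw [← step N]
        _ = Stmt9.ePi π b₀ * (∑ n ∈ Finset.range (N + 1 + 1), F n) + RR (N + 1) := by
            rw [Finset.sum_range_succ (f := F) (n := N + 1), mul_add, add_assoc]
  have hub : ∀ N, Stmt9.ePi π b₀ * ∑ n ∈ Finset.range N, F n ≤ Stmt9.ePi π j := by
    intro N
    cases N with
    | zero => simp
    | succ K => rw [main_id K]; exact le_self_add
  have h_upper : Stmt9.ePi π b₀ * ∑' n, F n ≤ Stmt9.ePi π j := by
    rw [ENNReal.tsum_eq_iSup_nat, ENNReal.mul_iSup]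
    exact iSup_le hub
  have hRRle : ∀ K, RR (K + 1) ≤ Stmt9.cE p π b₀ (K + 1) := fun K =>
    ENNReal.tsum_le_tsum fun i =>
      mul_le_mul_right (Stmt9.eT_le_aE hp_nonneg hp_row b₀ K (i : S) j) _
  have h_lower : Stmt9.ePi π j ≤ Stmt9.ePi π b₀ * ∑' n, F n := by
    refine ENNReal.le_of_forall_pos_le_add fun ε hε _ => ?_
    have hcinf := Stmt9.inf_cE hp_nonneg hp_row hirr hπ_nonneg hπ_sum hπ_stat b₀ hb0
    have hεpos : (0 : ℝ≥0∞) < (ε : ℝ≥0∞) := ENNReal.coe_pos.mpr hε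
    obtain ⟨K, hK⟩ : ∃ K, Stmt9.cE p π b₀ (K + 1) < (ε : ℝ≥0∞) :=
      iInf_lt_iff.mp (hcinf ▸ hεpos)
    calc Stmt9.ePi π j
        = Stmt9.ePi π b₀ * (∑ n ∈ Finset.range (K + 1 + 1), F n) + RR (K + 1) := main_id (K + 1)
      _ ≤ Stmt9.ePi π b₀ * ∑' n, F n + Stmt9.cE p π b₀ (K + 1) :=
          add_le_add (mul_le_mul_right (ENNReal.sum_le_tsum _) _) (hRRle K)
      _ ≤ Stmt9.ePi π b₀ * ∑' n, F n + (ε : ℝ≥0∞) := add_le_add_right hK.le _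
  have heq : Stmt9.ePi π j = Stmt9.ePi π b₀ * ∑' n, F n := le_antisymm h_lower h_upper
  have h1 : ∑' n : ℕ, tabooP p ({b₀} : Set S) (n + 1) b₀ j = (∑' n, F n).toReal := by
    rw [ENNReal.tsum_toReal_eq fun n => Stmt9.eT_ne_top hp_nonneg hp_row _ (n + 1) b₀ j]
    exact tsum_congr fun n => Stmt9.toReal_eT hp_nonneg hp_row ({b₀} : Set S) (n + 1) b₀ j
  calc π j = (Stmt9.ePi π j).toReal := (ENNReal.toReal_ofReal (hπ_nonneg j)).symm
    _ = (Stmt9.ePi π b₀ * ∑' n, F n).toReal := by rw [heq]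
    _ = (Stmt9.ePi π b₀).toReal * (∑' n, F n).toReal := ENNReal.toReal_mul
    _ = π b₀ * ∑' n : ℕ, tabooP p ({b₀} : Set S) (n + 1) b₀ j := by
        rw [h1]
        congr 1
        exact ENNReal.toReal_ofReal (hπ_nonneg b₀)
end

section
/- Let S = ℤ ∪ {∞} and let p be the stochastic matrix on S defined from data β, γ as in the context. If γ_n → 1 as |n| → ∞, then the weighted spectral gap inequality fails for every choice of data: there exist no function t : S → (0,∞), finite subset B ⊆ S, and constant ρ ∈ (0,1) such that Σ_{j∈S} p(i,j)·t_j ≤ ρ·t_i for every i ∈ S∖B. (First claim of Example 1.5.) -/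
/-- The stochastic matrix of Example 1.5 on the state space `S = ℤ ∪ {∞}`
(`none` plays the role of `∞`): `p(∞,n) = β_n`, `p(n,n) = γ_n`, `p(n,∞) = 1 - γ_n`,
and all other entries vanish. -/
noncomputable def exP (β γ : ℤ → ℝ) : Option ℤ → Option ℤ → ℝ
  | none, none => 0
  | none, some n => β n
  | some n, none => 1 - γ n
  | some n, some m => if n = m then γ n else 0

/-- First claim of Example 1.5: if `γ_n → 1` as `|n| → ∞`, then the weighted spectral gap
inequality fails for every choice of data `(t, B, ρ)`. -/
theorem stmt_11 (β γ : ℤ → ℝ)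
    (hβ_nonneg : ∀ n, 0 ≤ β n) (hβ_sum : HasSum β 1)
    (hγ0 : ∀ n, 0 ≤ γ n) (hγ1 : ∀ n, γ n < 1)
    (hγ_lim : Filter.Tendsto γ Filter.cofinite (nhds 1)) :
    ¬ ∃ (t : Option ℤ → ℝ) (B : Set (Option ℤ)) (ρ : ℝ),
        (∀ i, 0 < t i) ∧ B.Finite ∧ 0 < ρ ∧ ρ < 1 ∧
          ∀ i ∉ B, Summable (fun j => exP β γ i j * t j) ∧
            ∑' j, exP β γ i j * t j ≤ ρ * t i := by
  rintro ⟨t, B, ρ, ht, hB, hρ0, hρ1, h⟩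
  -- the set of n with γ n > ρ is cofinite
  have hcof : {n : ℤ | ρ < γ n} ∈ Filter.cofinite := hγ_lim (Ioi_mem_nhds hρ1)
  -- the set of n with some n ∈ B is finite
  have hfin : {n : ℤ | some n ∈ B}.Finite := by
    have : {n : ℤ | some n ∈ B} = some ⁻¹' B := rfl
    rw [this]
    exact Set.Finite.preimage (Option.some_injective ℤ).injOn hB
  have hne : ({n : ℤ | ρ < γ n} ∩ {n : ℤ | some n ∈ B}ᶜ).Nonempty :=
    Filter.nonempty_of_mem (Filter.inter_mem hcof hfin.compl_mem_cofinite)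
  obtain ⟨n, hρn, hnB⟩ := hne
  obtain ⟨hsum, hle⟩ := h (some n) hnB
  -- compute the tsum over the finite support {none, some n}
  have hsupport : ∀ j ∉ ({none, some n} : Finset (Option ℤ)),
      exP β γ (some n) j * t j = 0 := by
    intro j hj
    simp only [Finset.mem_insert, Finset.mem_singleton] at hj
    push_neg at hj
    obtain ⟨hj1, hj2⟩ := hj
    match j with
    | none => exact absurd rfl hj1
    | some m =>
      have : n ≠ m := fun h => hj2 (by rw [h])
      simp [exP, this]
  have htsum : ∑' j, exP β γ (some n) j * t j
      = (1 - γ n) * t none + γ n * t (some n) := by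
    rw [tsum_eq_sum hsupport]
    simp [exP]
  rw [htsum] at hle
  have h1 : 0 < (1 - γ n) * t none :=
    mul_pos (by linarith [hγ1 n]) (ht none)
  have h2 : ρ * t (some n) < γ n * t (some n) :=
    mul_lt_mul_of_pos_right hρn (ht (some n))
  linarith
end

section
/- Let S = ℤ ∪ {∞} and let p be the stochastic matrix on S defined from data β, γ as in the context. Suppose μ := Σ_{n∈ℤ} Σ_{k=0}^{∞} β_n·γ_n^k·(1−γ_n)·(k+2) < ∞. Then the chain is positive recurrent: it admits a stationary probability distribution π, given explicitly by π_∞ = 1/μ and π_n = β_n/(μ·(1−γ_n)) for n ∈ ℤ; i.e., π_j ≥ 0 for all j, Σ_{j∈S} π_j = 1 and Σ_{i∈S} π_i p(i,j) = π_j for every j ∈ S. (Second claim of Example 1.5: a chain without the weighted spectral gap property can still have an invariant distribution.) -/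
lemma hasSum_option' {f : Option ℤ → ℝ} {a : ℝ}
    (h : HasSum (fun n => f (some n)) a) : HasSum f (a + f none) := by
  have h1 : HasSum (fun i : Option ℤ => if i = none then f none else 0) (f none) :=
    hasSum_ite_eq none (f none)
  have h2 : HasSum (fun i : Option ℤ => if i = none then 0 else f i) a := by
    refine ((Option.some_injective ℤ).hasSum_iff ?_).mp ?_
    · intro x hx
      cases x with
      | none => simp
      | some n => exact absurd ⟨n, rfl⟩ hx
    · simpa [Function.comp_def] using h
  have := h2.add h1
  convert this using 1
  funext i
  cases i <;> simp


/-- Second claim of Example 1.5: if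
`μ = Σ_{n ∈ ℤ} Σ_{k ≥ 0} β_n γ_n^k (1 - γ_n) (k + 2) < ∞`, then the chain is positive
recurrent, with stationary probability distribution `π_∞ = 1/μ`,
`π_n = β_n / (μ (1 - γ_n))`. -/
theorem stmt_12 (β γ : ℤ → ℝ)
    (hβ_nonneg : ∀ n, 0 ≤ β n) (hβ_sum : HasSum β 1)
    (hγ0 : ∀ n, 0 ≤ γ n) (hγ1 : ∀ n, γ n < 1)
    (μ : ℝ)
    (hμ : HasSum (fun x : ℤ × ℕ =>
      β x.1 * γ x.1 ^ x.2 * (1 - γ x.1) * ((x.2 : ℝ) + 2)) μ)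
    (π : Option ℤ → ℝ)
    (hπ_inf : π none = 1 / μ)
    (hπ_int : ∀ n : ℤ, π (some n) = β n / (μ * (1 - γ n))) :
    (∀ j, 0 ≤ π j) ∧ HasSum π 1 ∧
      ∀ j, HasSum (fun i => π i * exP β γ i j) (π j) := by
  have hγne : ∀ n, (1 : ℝ) - γ n ≠ 0 := fun n => by linarith [hγ1 n]
  have hγpos : ∀ n, (0 : ℝ) < 1 - γ n := fun n => by linarith [hγ1 n]
  -- fiberwise sums
  have hfib : ∀ n : ℤ, HasSum (fun k : ℕ => β n * γ n ^ k * (1 - γ n) * ((k : ℝ) + 2))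
      (β n + β n / (1 - γ n)) := by
    intro n
    have hnorm : ‖γ n‖ < 1 := by
      rw [Real.norm_eq_abs, abs_of_nonneg (hγ0 n)]; exact hγ1 n
    have hk := hasSum_coe_mul_geometric_of_norm_lt_one hnorm
    have hgeo := hasSum_geometric_of_lt_one (hγ0 n) (hγ1 n)
    have h := (hk.add (hgeo.mul_left 2)).mul_left (β n * (1 - γ n))
    convert h using 1
    · rfl
    · funext k; ring
    · field_simp [hγne n]
      ring
  have hg : HasSum (fun n : ℤ => β n + β n / (1 - γ n)) μ :=
    hμ.prod_fiberwise hfib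
  have hs : HasSum (fun n : ℤ => β n / (1 - γ n)) (μ - 1) := by
    have := hg.sub hβ_sum
    simpa using this
  have hs_nonneg : (0 : ℝ) ≤ μ - 1 := by
    refine hasSum_le (fun n => ?_) hasSum_zero hs
    exact div_nonneg (hβ_nonneg n) (hγpos n).le
  have hμ1 : (1 : ℝ) ≤ μ := by linarith
  have hμpos : (0 : ℝ) < μ := by linarith
  have hμne : μ ≠ 0 := hμpos.ne'
  refine ⟨?_, ?_, ?_⟩
  · intro j
    cases j with
    | none => rw [hπ_inf]; positivity
    | some n =>
      rw [hπ_int n]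
      exact div_nonneg (hβ_nonneg n) (mul_nonneg hμpos.le (hγpos n).le)
  · have hsome : HasSum (fun n : ℤ => π (some n)) ((μ - 1) / μ) := by
      have := hs.div_const μ
      convert this using 2 with n
      · rfl
      rw [hπ_int n]; field_simp
    have := hasSum_option' hsome
    rw [hπ_inf] at this
    convert this using 1
    field_simp
    ring
  · intro j
    cases j with
    | none =>
      have hsome : HasSum (fun n : ℤ => π (some n) * exP β γ (some n) none) (1 / μ) := by
        have := hβ_sum.div_const μ
        convert this using 2 with n
        · rfl
        rw [hπ_int n]
        show β n / (μ * (1 - γ n)) * (1 - γ n) = β n / μ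
        field_simp [hγne n]
      have := hasSum_option' (f := fun i => π i * exP β γ i none) hsome
      simpa [exP, hπ_inf] using this
    | some m =>
      have hsome : HasSum (fun n : ℤ => π (some n) * exP β γ (some n) (some m))
          (π (some m) * γ m) := by
        have h1 : HasSum (fun n : ℤ => if n = m then π (some m) * γ m else 0)
            (π (some m) * γ m) := hasSum_ite_eq m _
        convert h1 using 2 with n
        show π (some n) * (if n = m then γ n else 0) = _
        by_cases h : n = m <;> simp [h]
      have := hasSum_option' (f := fun i => π i * exP β γ i (some m)) hsome
      convert this using 1
      show π (some m) = π (some m) * γ m + π none * β m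
      rw [hπ_inf, hπ_int m]
      field_simp [hγne m, hμne]
      ring
end
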